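/- arXiv:2011.09711 — 6 statements merged into one kernel-verified Lean document; each statement's English description precedes it below -/
import Mathlib

section
/- For all vectors v,w∈ℝ⁴ that are both divergence-free at ξ, one has ⟨B(ξ,ε)v, w⟩ + ⟨v, B(ξ,ε)w⟩ = −2ν|ξ|²⟨v,w⟩, where ⟨·,·⟩ is the standard inner product on ℝ⁴. (Equivalently, the penalization part of B(ξ,ε) acts skew-symmetrically on the divergence-free subspace.) -/
open Matrix

/-- The Fourier symbol `B(ξ,ε)` of the operator `νΔ − (1/ε)ℙ𝒜` (case `ν = ν'`). -/
noncomputable def Bmat (ν ε F ξ1 ξ2 ξ3 : ℝ) : Matrix (Fin 4) (Fin 4) ℝ :=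
  !![-ν * (ξ1^2 + ξ2^2 + ξ3^2) + ξ1 * ξ2 / (ε * (ξ1^2 + ξ2^2 + ξ3^2)),
       (ξ2^2 + ξ3^2) / (ε * (ξ1^2 + ξ2^2 + ξ3^2)), 0,
       ξ1 * ξ3 / (ε * F * (ξ1^2 + ξ2^2 + ξ3^2));
     -(ξ1^2 + ξ3^2) / (ε * (ξ1^2 + ξ2^2 + ξ3^2)),
       -ν * (ξ1^2 + ξ2^2 + ξ3^2) - ξ1 * ξ2 / (ε * (ξ1^2 + ξ2^2 + ξ3^2)), 0,
       ξ2 * ξ3 / (ε * F * (ξ1^2 + ξ2^2 + ξ3^2));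
     ξ2 * ξ3 / (ε * (ξ1^2 + ξ2^2 + ξ3^2)),
       -(ξ1 * ξ3) / (ε * (ξ1^2 + ξ2^2 + ξ3^2)),
       -ν * (ξ1^2 + ξ2^2 + ξ3^2),
       -(ξ1^2 + ξ2^2) / (ε * F * (ξ1^2 + ξ2^2 + ξ3^2));
     0, 0, 1 / (ε * F), -ν * (ξ1^2 + ξ2^2 + ξ3^2)]

set_option maxHeartbeats 1000000 in
/-- On the divergence-free subspace at `ξ`, one has
`⟨Bv,w⟩ + ⟨v,Bw⟩ = −2ν|ξ|²⟨v,w⟩` for the standard inner product of `ℝ⁴`. -/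
theorem skew_symmetry_on_divfree
    (ν ε F ξ1 ξ2 ξ3 : ℝ) (hν : 0 < ν) (hε : 0 < ε) (hF : 0 < F)
    (hξ : ¬(ξ1 = 0 ∧ ξ2 = 0 ∧ ξ3 = 0)) :
    ∀ v w : Fin 4 → ℝ,
      ξ1 * v 0 + ξ2 * v 1 + ξ3 * v 2 = 0 →
      ξ1 * w 0 + ξ2 * w 1 + ξ3 * w 2 = 0 →
      (∑ i, (Bmat ν ε F ξ1 ξ2 ξ3).mulVec v i * w i) +
        (∑ i, v i * (Bmat ν ε F ξ1 ξ2 ξ3).mulVec w i) =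
        -2 * ν * (ξ1^2 + ξ2^2 + ξ3^2) * ∑ i, v i * w i := by
  intro v w hv hw
  have hS : ξ1^2 + ξ2^2 + ξ3^2 ≠ 0 := by
    intro h
    apply hξ
    refine ⟨?_, ?_, ?_⟩ <;>
      [ (have : ξ1^2 = 0 := by nlinarith [sq_nonneg ξ2, sq_nonneg ξ3]);
        (have : ξ2^2 = 0 := by nlinarith [sq_nonneg ξ1, sq_nonneg ξ3]);
        (have : ξ3^2 = 0 := by nlinarith [sq_nonneg ξ1, sq_nonneg ξ2])] <;>
      exact pow_eq_zero_iff two_ne_zero |>.mp this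
  simp only [Bmat, mulVec, dotProduct, Fin.sum_univ_four, Fin.isValue,
    cons_val', cons_val_zero, cons_val_one, head_cons, empty_val',
    cons_val_fin_one, cons_val_two, tail_cons, cons_val_three, head_fin_const, of_apply]
  field_simp
  linear_combination
    ((F * (ξ2 * w 0 - ξ1 * w 1) + ξ3 * w 3)) * hv +
    ((F * (ξ2 * v 0 - ξ1 * v 1) + ξ3 * v 3)) * hw
end

section
/- The vector w(ξ) = (−ξ₂, ξ₁, 0, −Fξ₃) ∈ ℝ⁴ is divergence-free at ξ and is an eigenvector of B(ξ,ε) with eigenvalue μ = −ν|ξ|², i.e. B(ξ,ε)·w(ξ) = −ν|ξ|²·w(ξ). (This eigenvector corresponds to the quasi-geostrophic part of the flow.) -/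
open Matrix

/-- The vector `(−ξ₂, ξ₁, 0, −Fξ₃)` is divergence-free at `ξ` and is an
eigenvector of `B(ξ,ε)` for the eigenvalue `μ = −ν|ξ|²` (quasi-geostrophic part). -/
theorem qg_eigenvector
    (ν ε F ξ1 ξ2 ξ3 : ℝ) (hν : 0 < ν) (hε : 0 < ε) (hF : 0 < F)
    (hξ : ¬(ξ1 = 0 ∧ ξ2 = 0 ∧ ξ3 = 0)) :
    (ξ1 * (-ξ2) + ξ2 * ξ1 + ξ3 * 0 = 0) ∧
    (Bmat ν ε F ξ1 ξ2 ξ3).mulVec ![-ξ2, ξ1, 0, -F * ξ3] =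
      (-ν * (ξ1^2 + ξ2^2 + ξ3^2)) • ![-ξ2, ξ1, 0, -F * ξ3] := by
  have hq : ξ1^2 + ξ2^2 + ξ3^2 ≠ 0 := by
    intro h
    apply hξ
    have h1 : ξ1 = 0 ∧ ξ2 = 0 ∧ ξ3 = 0 := by
      constructor
      · nlinarith [sq_nonneg ξ1, sq_nonneg ξ2, sq_nonneg ξ3]
      constructor
      · nlinarith [sq_nonneg ξ1, sq_nonneg ξ2, sq_nonneg ξ3]
      · nlinarith [sq_nonneg ξ1, sq_nonneg ξ2, sq_nonneg ξ3]
    exact h1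
  refine ⟨by ring, ?_⟩
  funext i
  fin_cases i <;>
    simp [Bmat, Matrix.mulVec, dotProduct, Fin.sum_univ_succ] <;>
    field_simp <;> ring
end

section
/- For each choice of sign ±, the complex number λ_± = −ν|ξ|² ± i·|ξ|_F/(εF|ξ|) is an eigenvalue of the complexification of B(ξ,ε), and it admits a nonzero eigenvector v∈ℂ⁴ that is divergence-free at ξ (i.e. ξ₁v₁+ξ₂v₂+ξ₃v₃=0 and B(ξ,ε)v = λ_± v). -/
open Matrix

/-- The complexification of `B(ξ,ε)`. -/
noncomputable def BmatC (ν ε F ξ1 ξ2 ξ3 : ℝ) : Matrix (Fin 4) (Fin 4) ℂ :=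
  (Bmat ν ε F ξ1 ξ2 ξ3).map (fun a => (a : ℂ))

set_option maxHeartbeats 2000000 in
/-- For each sign `±`, the complex number `λ± = −ν|ξ|² ± i|ξ|_F/(εF|ξ|)` is an
eigenvalue of the complexification of `B(ξ,ε)`, with a nonzero divergence-free
eigenvector. -/
theorem oscillating_eigenvalues
    (ν ε F ξ1 ξ2 ξ3 : ℝ) (hν : 0 < ν) (hε : 0 < ε) (hF : 0 < F)
    (hξ : ¬(ξ1 = 0 ∧ ξ2 = 0 ∧ ξ3 = 0))
    (sgn : ℝ) (hsgn : sgn = 1 ∨ sgn = -1) :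
    ∃ v : Fin 4 → ℂ, v ≠ 0 ∧
      (ξ1 : ℂ) * v 0 + (ξ2 : ℂ) * v 1 + (ξ3 : ℂ) * v 2 = 0 ∧
      (BmatC ν ε F ξ1 ξ2 ξ3).mulVec v =
        (((-ν * (ξ1^2 + ξ2^2 + ξ3^2) : ℝ) : ℂ) +
          (sgn : ℂ) * Complex.I *
            ((Real.sqrt (ξ1^2 + ξ2^2 + F^2 * ξ3^2) /
                (ε * F * Real.sqrt (ξ1^2 + ξ2^2 + ξ3^2)) : ℝ) : ℂ)) • v := by
  have hεc : (ε:ℂ) ≠ 0 := by exact_mod_cast hε.ne'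
  have hFc : (F:ℂ) ≠ 0 := by exact_mod_cast hF.ne'
  by_cases hh : ξ1 = 0 ∧ ξ2 = 0
  · -- degenerate case : horizontal frequency zero
    obtain ⟨h1, h2⟩ := hh
    subst h1; subst h2
    have hξ3 : ξ3 ≠ 0 := fun h => hξ ⟨rfl, rfl, h⟩
    have hξ3c : (ξ3:ℂ) ≠ 0 := by exact_mod_cast hξ3
    have habs : |ξ3| ≠ 0 := abs_ne_zero.mpr hξ3
    have hsq1 : Real.sqrt ((0:ℝ)^2 + 0^2 + F^2 * ξ3^2) = F * |ξ3| := by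
      rw [show (0:ℝ)^2 + 0^2 + F^2*ξ3^2 = (F*ξ3)^2 by ring, Real.sqrt_sq_eq_abs,
        abs_mul, abs_of_pos hF]
    have hsq2 : Real.sqrt ((0:ℝ)^2 + 0^2 + ξ3^2) = |ξ3| := by
      rw [show (0:ℝ)^2 + 0^2 + ξ3^2 = ξ3^2 by ring, Real.sqrt_sq_eq_abs]
    have hscal : (Real.sqrt ((0:ℝ)^2 + 0^2 + F^2 * ξ3^2) /
        (ε * F * Real.sqrt ((0:ℝ)^2 + 0^2 + ξ3^2)) : ℝ) = 1/ε := by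
      rw [hsq1, hsq2]; field_simp
    rw [hscal]
    have hl2 : ((sgn:ℂ) * Complex.I)^2 = -1 := by
      rcases hsgn with h | h <;> rw [h] <;> simp [Complex.I_sq]
    refine ⟨![1, (sgn:ℂ) * Complex.I, 0, 0], ?_, by push_cast; simp, ?_⟩
    · intro h
      have := congrFun h 0
      simp at this
    · funext i
      fin_cases i <;>
        simp [BmatC, Bmat, Matrix.mulVec, dotProduct, Fin.sum_univ_four] <;>
        push_cast <;> field_simp
      all_goals try ring
      all_goals (first
        | linear_combination (-((ξ3:ℂ)^2 * (ε:ℂ))) * hl2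
        | linear_combination ((ξ3:ℂ)^2 * (ε:ℂ)) * hl2
        | linear_combination (-(1 + (ξ3:ℂ)^2 * (ε:ℂ))) * hl2
        | linear_combination (-1 : ℂ) * hl2)
  · -- main case : ξ1^2 + ξ2^2 > 0
    have hh2 : (0:ℝ) < ξ1^2 + ξ2^2 := by
      rcases (not_and_or.mp hh) with h | h
      · have : ξ1^2 > 0 := by positivity
        nlinarith [sq_nonneg ξ2]
      · have : ξ2^2 > 0 := by positivity
        nlinarith [sq_nonneg ξ1]
    have hr2 : (0:ℝ) < ξ1^2 + ξ2^2 + ξ3^2 := by nlinarith [sq_nonneg ξ3]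
    have hρ2 : (0:ℝ) < ξ1^2 + ξ2^2 + F^2 * ξ3^2 := by nlinarith [sq_nonneg (F*ξ3)]
    have hRc : ((ξ1:ℂ)^2 + (ξ2:ℂ)^2 + (ξ3:ℂ)^2) ≠ 0 := by
      have : ((ξ1^2 + ξ2^2 + ξ3^2 : ℝ):ℂ) ≠ 0 := by exact_mod_cast hr2.ne'
      push_cast at this; convert this using 2 <;> push_cast <;> ring
    set l : ℂ := (sgn:ℂ) * Complex.I *
      ((Real.sqrt (ξ1^2 + ξ2^2 + F^2 * ξ3^2) / (F * Real.sqrt (ξ1^2 + ξ2^2 + ξ3^2)) : ℝ) : ℂ)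
      with hlval
    have hl2 : l^2 * ((F:ℂ)^2 * ((ξ1:ℂ)^2 + (ξ2:ℂ)^2 + (ξ3:ℂ)^2))
        = -((ξ1:ℂ)^2 + (ξ2:ℂ)^2 + (F:ℂ)^2 * (ξ3:ℂ)^2) := by
      have ht : (Real.sqrt (ξ1^2 + ξ2^2 + F^2 * ξ3^2) /
          (F * Real.sqrt (ξ1^2 + ξ2^2 + ξ3^2)))^2 * (F^2 * (ξ1^2 + ξ2^2 + ξ3^2))
          = (ξ1^2 + ξ2^2 + F^2 * ξ3^2) := by
        rw [div_pow, mul_pow, Real.sq_sqrt hρ2.le, Real.sq_sqrt hr2.le]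
        field_simp
      have htc := congrArg (fun x : ℝ => (x:ℂ)) ht
      push_cast at htc
      rcases hsgn with h | h <;> rw [hlval, h] <;> push_cast <;>
        linear_combination Complex.I^2 * htc +
          ((ξ1:ℂ)^2 + (ξ2:ℂ)^2 + (F:ℂ)^2 * (ξ3:ℂ)^2) * Complex.I_sq
    have hSS : (((-ν * (ξ1^2 + ξ2^2 + ξ3^2) : ℝ) : ℂ) +
          (sgn : ℂ) * Complex.I *
            ((Real.sqrt (ξ1^2 + ξ2^2 + F^2 * ξ3^2) /
                (ε * F * Real.sqrt (ξ1^2 + ξ2^2 + ξ3^2)) : ℝ) : ℂ))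
        = ((-ν * (ξ1^2 + ξ2^2 + ξ3^2) : ℝ) : ℂ) + l / (ε:ℂ) := by
      rw [hlval]
      push_cast
      ring
    rw [hSS]
    clear_value l
    have hD : (ε:ℂ) * ((ξ1:ℂ)^2 + (ξ2:ℂ)^2 + (ξ3:ℂ)^2) *
        ((ε:ℂ) * ((ξ1:ℂ)^2 + (ξ2:ℂ)^2 + (ξ3:ℂ)^2)) *
        ((ε:ℂ) * (F:ℂ) * ((ξ1:ℂ)^2 + (ξ2:ℂ)^2 + (ξ3:ℂ)^2) * (F:ℂ)) ≠ 0 := by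
      simp [hεc, hFc, hRc]
    have hh2c : ((ξ1:ℂ)^2 + (ξ2:ℂ)^2) ≠ 0 := by
      have : ((ξ1^2 + ξ2^2 : ℝ):ℂ) ≠ 0 := by exact_mod_cast hh2.ne'
      push_cast at this; convert this using 2 <;> push_cast <;> ring
    refine ⟨![-(ξ3:ℂ) * ((ξ2:ℂ) + l * (ξ1:ℂ)), (ξ3:ℂ) * ((ξ1:ℂ) - l * (ξ2:ℂ)),
      l * ((ξ1:ℂ)^2 + (ξ2:ℂ)^2), ((ξ1:ℂ)^2 + (ξ2:ℂ)^2) / (F:ℂ)], ?_, by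
        simp only [Matrix.cons_val_zero, Matrix.cons_val_one, Matrix.head_cons,
          Matrix.cons_val_two, Matrix.tail_cons]
        ring, ?_⟩
    · intro h
      have h3 := congrFun h 3
      simp [div_eq_zero_iff, hFc] at h3
      exact hh2c h3
    · funext i
      fin_cases i <;>
        simp [BmatC, Bmat, Matrix.mulVec, dotProduct, Fin.sum_univ_four] <;>
        push_cast <;> field_simp
      all_goals try ring
      · linear_combination ((ξ1:ℂ)*(ξ3:ℂ)) * hl2
      · linear_combination ((ξ2:ℂ)*(ξ3:ℂ)) * hl2
      · linear_combination (-((ξ1:ℂ)^2+(ξ2:ℂ)^2)) * hl2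
end

section
/- Set μ = −ν|ξ|², λ = −ν|ξ|² + i·|ξ|_F/(εF|ξ|), and λ̄ its complex conjugate. Then there exist nonzero vectors v₂, v₃, v₄ ∈ ℂ⁴, pairwise orthogonal for the standard Hermitian inner product on ℂ⁴, each divergence-free at ξ, spanning the three-dimensional subspace {v∈ℂ⁴ : ξ₁v₁+ξ₂v₂+ξ₃v₃=0}, such that B(ξ,ε)v₂ = μ v₂, B(ξ,ε)v₃ = λ v₃ and B(ξ,ε)v₄ = λ̄ v₄. In particular B(ξ,ε) restricted to the divergence-free subspace is diagonalizable over ℂ with eigenvalues μ, λ, λ̄. -/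
open Matrix

lemma span_divfree_aux (x1 x2 x3 : ℝ) (hx : ¬(x1 = 0 ∧ x2 = 0 ∧ x3 = 0))
    (v2 v3 v4 : Fin 4 → ℂ)
    (h2 : (x1 : ℂ) * v2 0 + (x2 : ℂ) * v2 1 + (x3 : ℂ) * v2 2 = 0)
    (h3 : (x1 : ℂ) * v3 0 + (x2 : ℂ) * v3 1 + (x3 : ℂ) * v3 2 = 0)
    (h4 : (x1 : ℂ) * v4 0 + (x2 : ℂ) * v4 1 + (x3 : ℂ) * v4 2 = 0)
    (hli : LinearIndependent ℂ ![v2, v3, v4]) :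
    ∀ v : Fin 4 → ℂ,
      (x1 : ℂ) * v 0 + (x2 : ℂ) * v 1 + (x3 : ℂ) * v 2 = 0 ↔
        v ∈ Submodule.span ℂ ({v2, v3, v4} : Set (Fin 4 → ℂ)) := by
  classical
  set φ : (Fin 4 → ℂ) →ₗ[ℂ] ℂ :=
    { toFun := fun v => (x1 : ℂ) * v 0 + (x2 : ℂ) * v 1 + (x3 : ℂ) * v 2
      map_add' := by intro a b; simp [Pi.add_apply]; ring
      map_smul' := by intro c a; simp [Pi.smul_apply, smul_eq_mul]; ring } with hφ
  have hφapp : ∀ v, φ v = (x1 : ℂ) * v 0 + (x2 : ℂ) * v 1 + (x3 : ℂ) * v 2 :=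
    fun v => rfl
  have hex : ∃ w, φ w ≠ 0 := by
    rcases not_and_or.mp hx with h | h
    · exact ⟨Pi.single 0 1, by
        simp [hφapp, Pi.single_apply]
        exact_mod_cast h⟩
    · rcases not_and_or.mp h with h | h
      · exact ⟨Pi.single 1 1, by
          simp [hφapp, Pi.single_apply]
          exact_mod_cast h⟩
      · exact ⟨Pi.single 2 1, by
          simp [hφapp, Pi.single_apply]
          exact_mod_cast h⟩
  have hrange : LinearMap.range φ = ⊤ := by
    rcases hex with ⟨w, hw⟩
    rw [LinearMap.range_eq_top]
    intro c
    exact ⟨(c / φ w) • w, by simp [_root_.map_smul, smul_eq_mul, div_mul_cancel₀ _ hw]⟩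
  have hker : Module.finrank ℂ (LinearMap.ker φ) = 3 := by
    have := LinearMap.finrank_range_add_finrank_ker φ
    rw [hrange] at this
    simp [Module.finrank_pi] at this
    omega
  have hrangeset : Set.range ![v2, v3, v4] = {v2, v3, v4} := by
    simp only [Matrix.range_cons, Matrix.range_empty, Set.union_empty]
    ext w
    constructor
    · rintro (rfl | rfl | rfl) <;> simp
    · rintro (rfl | rfl | rfl) <;> simp
  have hspanrank : Module.finrank ℂ
      (Submodule.span ℂ ({v2, v3, v4} : Set (Fin 4 → ℂ))) = 3 := by
    rw [← hrangeset, finrank_span_eq_card hli]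
    simp
  have hle : Submodule.span ℂ ({v2, v3, v4} : Set (Fin 4 → ℂ)) ≤ LinearMap.ker φ := by
    rw [Submodule.span_le]
    intro w hw
    rcases hw with rfl | rfl | rfl <;>
      simp only [SetLike.mem_coe, LinearMap.mem_ker, hφapp] <;>
      first
        | exact h2
        | exact h3
        | exact h4
  have heq : Submodule.span ℂ ({v2, v3, v4} : Set (Fin 4 → ℂ)) = LinearMap.ker φ :=
    Submodule.eq_of_le_of_finrank_le hle (le_of_eq (by rw [hker, hspanrank]))
  intro v
  rw [heq, LinearMap.mem_ker, hφapp]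

set_option maxHeartbeats 2000000 in
/-- `B(ξ,ε)` restricted to the divergence-free subspace is diagonalizable over `ℂ`
with eigenvalues `μ = −ν|ξ|²`, `λ = −ν|ξ|² + i|ξ|_F/(εF|ξ|)` and `λ̄`: there is an
orthogonal basis of divergence-free eigenvectors spanning that subspace. -/
theorem diagonalization_on_divfree
    (ν ε F ξ1 ξ2 ξ3 : ℝ) (hν : 0 < ν) (hε : 0 < ε) (hF : 0 < F)
    (hξ : ¬(ξ1 = 0 ∧ ξ2 = 0 ∧ ξ3 = 0)) :
    ∃ v2 v3 v4 : Fin 4 → ℂ,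
      v2 ≠ 0 ∧ v3 ≠ 0 ∧ v4 ≠ 0 ∧
      (∑ k, starRingEnd ℂ (v2 k) * v3 k = 0) ∧
      (∑ k, starRingEnd ℂ (v2 k) * v4 k = 0) ∧
      (∑ k, starRingEnd ℂ (v3 k) * v4 k = 0) ∧
      ((ξ1 : ℂ) * v2 0 + (ξ2 : ℂ) * v2 1 + (ξ3 : ℂ) * v2 2 = 0) ∧
      ((ξ1 : ℂ) * v3 0 + (ξ2 : ℂ) * v3 1 + (ξ3 : ℂ) * v3 2 = 0) ∧
      ((ξ1 : ℂ) * v4 0 + (ξ2 : ℂ) * v4 1 + (ξ3 : ℂ) * v4 2 = 0) ∧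
      (∀ v : Fin 4 → ℂ,
        (ξ1 : ℂ) * v 0 + (ξ2 : ℂ) * v 1 + (ξ3 : ℂ) * v 2 = 0 ↔
          v ∈ Submodule.span ℂ ({v2, v3, v4} : Set (Fin 4 → ℂ))) ∧
      (BmatC ν ε F ξ1 ξ2 ξ3).mulVec v2 =
        (((-ν * (ξ1^2 + ξ2^2 + ξ3^2) : ℝ) : ℂ)) • v2 ∧
      (BmatC ν ε F ξ1 ξ2 ξ3).mulVec v3 =
        (((-ν * (ξ1^2 + ξ2^2 + ξ3^2) : ℝ) : ℂ) +
          Complex.I * ((Real.sqrt (ξ1^2 + ξ2^2 + F^2 * ξ3^2) /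
            (ε * F * Real.sqrt (ξ1^2 + ξ2^2 + ξ3^2)) : ℝ) : ℂ)) • v3 ∧
      (BmatC ν ε F ξ1 ξ2 ξ3).mulVec v4 =
        (starRingEnd ℂ (((-ν * (ξ1^2 + ξ2^2 + ξ3^2) : ℝ) : ℂ) +
          Complex.I * ((Real.sqrt (ξ1^2 + ξ2^2 + F^2 * ξ3^2) /
            (ε * F * Real.sqrt (ξ1^2 + ξ2^2 + ξ3^2)) : ℝ) : ℂ))) • v4 := by
  have hεC : (ε:ℂ) ≠ 0 := by exact_mod_cast hε.ne'
  have hFC : (F:ℂ) ≠ 0 := by exact_mod_cast hF.ne'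
  by_cases hc : ξ1 = 0 ∧ ξ2 = 0
  · -- degenerate case ξ1 = ξ2 = 0
    obtain ⟨h1, h2⟩ := hc
    subst h1; subst h2
    have h3 : ξ3 ≠ 0 := by
      intro h; exact hξ ⟨rfl, rfl, h⟩
    have hξ3C : (ξ3:ℂ) ≠ 0 := by exact_mod_cast h3
    have key : (Real.sqrt ((0:ℝ)^2 + (0:ℝ)^2 + F^2*ξ3^2) /
        (ε*F*Real.sqrt ((0:ℝ)^2 + (0:ℝ)^2 + ξ3^2)) : ℝ) = 1/ε := by
      have e1 : (0:ℝ)^2+(0:ℝ)^2+F^2*ξ3^2 = (F*|ξ3|)^2 := by rw [mul_pow, sq_abs]; ring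
      have e2 : (0:ℝ)^2+(0:ℝ)^2+ξ3^2 = |ξ3|^2 := by rw [sq_abs]; ring
      rw [e1, e2, Real.sqrt_sq (by positivity), Real.sqrt_sq (abs_nonneg _)]
      have h3' : |ξ3| ≠ 0 := abs_ne_zero.mpr h3
      field_simp
    have hli : LinearIndependent ℂ
        ![![0, 0, 0, (1:ℂ)], ![1, Complex.I, 0, 0], ![1, -Complex.I, 0, 0]] := by
      rw [Fintype.linearIndependent_iff]
      intro g hg
      rw [Fin.sum_univ_three] at hg
      have e0 := congrFun hg 0
      have e1 := congrFun hg 1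
      have e3 := congrFun hg 3
      simp only [Matrix.cons_val_zero, Matrix.cons_val_one, Matrix.head_cons,
        Matrix.cons_val_two, Matrix.tail_cons, Matrix.cons_val_three, Pi.add_apply,
        Pi.smul_apply, smul_eq_mul, Pi.zero_apply, mul_zero, mul_one, zero_add,
        add_zero] at e0 e1 e3
      have h12 : g 1 = g 2 := by
        have h' : Complex.I * (g 1 - g 2) = 0 := by linear_combination e1
        exact sub_eq_zero.mp ((mul_eq_zero.mp h').resolve_left Complex.I_ne_zero)
      intro i
      fin_cases i
      · exact e3
      · have h1 : g 1 = 0 := by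
          have : (2:ℂ) * g 1 = 0 := by rw [← h12] at e0; linear_combination e0
          exact (mul_eq_zero.mp this).resolve_left two_ne_zero
        exact h1
      · have h1 : g 1 = 0 := by
          have : (2:ℂ) * g 1 = 0 := by rw [← h12] at e0; linear_combination e0
          exact (mul_eq_zero.mp this).resolve_left two_ne_zero
        exact h12 ▸ h1
    refine ⟨![0, 0, 0, 1], ![1, Complex.I, 0, 0], ![1, -Complex.I, 0, 0],
      ?_, ?_, ?_, ?_, ?_, ?_, ?_, ?_, ?_, ?_, ?_, ?_, ?_⟩
    · intro h; simpa using congrFun h 3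
    · intro h; simpa using congrFun h 0
    · intro h; simpa using congrFun h 0
    · rw [Fin.sum_univ_four]; simp
    · rw [Fin.sum_univ_four]; simp
    · rw [Fin.sum_univ_four]
      simp only [Matrix.cons_val_zero, Matrix.cons_val_one, Matrix.head_cons,
        Matrix.cons_val_two, Matrix.tail_cons, Matrix.cons_val_three, _root_.map_one,
        Complex.conj_I, _root_.map_zero, mul_one, one_mul, mul_zero, zero_mul, add_zero]
      linear_combination Complex.I_sq
    · simp
    · simp
    · simp
    · exact span_divfree_aux 0 0 ξ3 hξ _ _ _ (by simp) (by simp) (by simp) hli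
    · funext k
      fin_cases k <;>
        simp [BmatC, Bmat, Matrix.mulVec, dotProduct, Fin.sum_univ_four] <;>
        push_cast <;> field_simp
    · rw [key]
      funext k
      fin_cases k <;>
        simp [BmatC, Bmat, Matrix.mulVec, dotProduct, Fin.sum_univ_four] <;>
        push_cast <;> field_simp <;> ring_nf <;> simp [Complex.I_sq] <;> ring_nf
    · rw [key]
      have hconj : starRingEnd ℂ (((-ν * ((0:ℝ)^2 + (0:ℝ)^2 + ξ3^2) : ℝ) : ℂ) +
          Complex.I * ((1/ε : ℝ) : ℂ)) =
          ((-ν * ((0:ℝ)^2 + (0:ℝ)^2 + ξ3^2) : ℝ) : ℂ) - Complex.I * ((1/ε : ℝ) : ℂ) := by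
        simp [_root_.map_add, _root_.map_mul, Complex.conj_ofReal, Complex.conj_I]
        ring
      rw [hconj]
      funext k
      fin_cases k <;>
        simp [BmatC, Bmat, Matrix.mulVec, dotProduct, Fin.sum_univ_four] <;>
        push_cast <;> field_simp <;> ring_nf <;> simp [Complex.I_sq] <;> ring_nf
  · -- generic case ξ1² + ξ2² > 0
    have hh : (0:ℝ) < ξ1^2 + ξ2^2 := by
      rcases not_and_or.mp hc with h | h
      · positivity
      · positivity
    have hs : (0:ℝ) < ξ1^2 + ξ2^2 + ξ3^2 := by nlinarith [sq_nonneg ξ3]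
    have ht : (0:ℝ) < ξ1^2 + ξ2^2 + F^2*ξ3^2 := by nlinarith [sq_nonneg (F*ξ3)]
    obtain ⟨r, hrpos, hr, hlam⟩ : ∃ r : ℝ, 0 < r ∧
        r^2 * (ξ1^2 + ξ2^2 + ξ3^2) = ξ1^2 + ξ2^2 + F^2*ξ3^2 ∧
        (Real.sqrt (ξ1^2 + ξ2^2 + F^2 * ξ3^2) /
            (ε * F * Real.sqrt (ξ1^2 + ξ2^2 + ξ3^2)) : ℝ) = r / (ε * F) := by
      refine ⟨Real.sqrt (ξ1^2 + ξ2^2 + F^2*ξ3^2) / Real.sqrt (ξ1^2 + ξ2^2 + ξ3^2),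
        div_pos (Real.sqrt_pos.mpr ht) (Real.sqrt_pos.mpr hs), ?_, ?_⟩
      · rw [div_pow, Real.sq_sqrt ht.le, Real.sq_sqrt hs.le]
        field_simp
        try exact Or.inl trivial
      · rw [div_div, mul_comm (Real.sqrt (ξ1^2 + ξ2^2 + ξ3^2)) (ε*F)]
    have hhC : ((ξ1:ℂ)^2 + (ξ2:ℂ)^2) ≠ 0 := by
      have : ((ξ1^2 + ξ2^2 : ℝ) : ℂ) ≠ 0 := by exact_mod_cast hh.ne'
      push_cast at this; exact this
    have hsC : ((ξ1:ℂ)^2 + (ξ2:ℂ)^2 + (ξ3:ℂ)^2) ≠ 0 := by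
      have : ((ξ1^2 + ξ2^2 + ξ3^2 : ℝ) : ℂ) ≠ 0 := by exact_mod_cast hs.ne'
      push_cast at this; exact this
    have htC : ((ξ1:ℂ)^2 + (ξ2:ℂ)^2 + (F:ℂ)^2*(ξ3:ℂ)^2) ≠ 0 := by
      have : ((ξ1^2 + ξ2^2 + F^2*ξ3^2 : ℝ) : ℂ) ≠ 0 := by exact_mod_cast ht.ne'
      push_cast at this; exact this
    have hrC : (r:ℂ)^2 * ((ξ1:ℂ)^2+(ξ2:ℂ)^2+(ξ3:ℂ)^2) = (ξ1:ℂ)^2+(ξ2:ℂ)^2+(F:ℂ)^2*(ξ3:ℂ)^2 := by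
      have : ((r^2 * (ξ1^2+ξ2^2+ξ3^2) : ℝ) : ℂ) = ((ξ1^2+ξ2^2+F^2*ξ3^2 : ℝ) : ℂ) := by
        exact_mod_cast congrArg (fun x : ℝ => (x:ℂ)) hr
      push_cast at this; exact this
    have hrCne : (r:ℂ) ≠ 0 := by exact_mod_cast hrpos.ne'
    have hli : LinearIndependent ℂ
        ![![(ξ2:ℂ), -(ξ1:ℂ), 0, (F:ℂ)*ξ3],
          ![-(ξ3:ℂ)*((F:ℂ)*ξ2 + Complex.I*r*ξ1), (ξ3:ℂ)*((F:ℂ)*ξ1 - Complex.I*r*ξ2),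
            Complex.I*(r:ℂ)*((ξ1:ℂ)^2+(ξ2:ℂ)^2), ((ξ1:ℂ)^2+(ξ2:ℂ)^2)],
          ![-(ξ3:ℂ)*((F:ℂ)*ξ2 - Complex.I*r*ξ1), (ξ3:ℂ)*((F:ℂ)*ξ1 + Complex.I*r*ξ2),
            -(Complex.I*(r:ℂ)*((ξ1:ℂ)^2+(ξ2:ℂ)^2)), ((ξ1:ℂ)^2+(ξ2:ℂ)^2)]] := by
      rw [Fintype.linearIndependent_iff]
      intro g hg
      rw [Fin.sum_univ_three] at hg
      have e0 := congrFun hg 0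
      have e1 := congrFun hg 1
      have e2 := congrFun hg 2
      have e3 := congrFun hg 3
      simp only [Matrix.cons_val_zero, Matrix.cons_val_one, Matrix.head_cons,
        Matrix.cons_val_two, Matrix.tail_cons, Matrix.cons_val_three, Pi.add_apply,
        Pi.smul_apply, smul_eq_mul, Pi.zero_apply] at e0 e1 e2 e3
      have h12 : g 1 = g 2 := by
        have h' : (Complex.I * r * ((ξ1:ℂ)^2+(ξ2:ℂ)^2)) * (g 1 - g 2) = 0 := by
          linear_combination e2
        have hne : (Complex.I * r * ((ξ1:ℂ)^2+(ξ2:ℂ)^2)) ≠ 0 :=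
          mul_ne_zero (mul_ne_zero Complex.I_ne_zero hrCne) hhC
        exact sub_eq_zero.mp ((mul_eq_zero.mp h').resolve_left hne)
      rw [← h12] at e0 e1 e3
      have h0 : g 0 = 2*(F:ℂ)*(ξ3:ℂ)*g 1 := by
        have h' : ((ξ1:ℂ)^2+(ξ2:ℂ)^2) * (g 0 - 2*(F:ℂ)*(ξ3:ℂ)*g 1) = 0 := by
          linear_combination (ξ2:ℂ)*e0 - (ξ1:ℂ)*e1
        have := (mul_eq_zero.mp h').resolve_left hhC
        linear_combination this
      have h1 : g 1 = 0 := by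
        rw [h0] at e3
        have h' : ((2:ℂ)*((ξ1:ℂ)^2+(ξ2:ℂ)^2+(F:ℂ)^2*(ξ3:ℂ)^2)) * g 1 = 0 := by
          linear_combination e3
        exact (mul_eq_zero.mp h').resolve_left (mul_ne_zero two_ne_zero htC)
      intro i
      fin_cases i
      · show g 0 = 0
        rw [h0, h1]; ring
      · exact h1
      · exact h12 ▸ h1
    refine ⟨![(ξ2:ℂ), -(ξ1:ℂ), 0, (F:ℂ)*ξ3],
      ![-(ξ3:ℂ)*((F:ℂ)*ξ2 + Complex.I*r*ξ1), (ξ3:ℂ)*((F:ℂ)*ξ1 - Complex.I*r*ξ2),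
        Complex.I*(r:ℂ)*((ξ1:ℂ)^2+(ξ2:ℂ)^2), ((ξ1:ℂ)^2+(ξ2:ℂ)^2)],
      ![-(ξ3:ℂ)*((F:ℂ)*ξ2 - Complex.I*r*ξ1), (ξ3:ℂ)*((F:ℂ)*ξ1 + Complex.I*r*ξ2),
        -(Complex.I*(r:ℂ)*((ξ1:ℂ)^2+(ξ2:ℂ)^2)), ((ξ1:ℂ)^2+(ξ2:ℂ)^2)],
      ?_, ?_, ?_, ?_, ?_, ?_, ?_, ?_, ?_, ?_, ?_, ?_, ?_⟩
    · intro h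
      rcases not_and_or.mp hc with h1 | h2
      · have := congrFun h 1
        simp at this
        exact h1 (by exact_mod_cast this)
      · have := congrFun h 0
        simp at this
        exact h2 (by exact_mod_cast this)
    · intro h
      have := congrFun h 3
      simp only [Matrix.cons_val_three, Matrix.tail_cons, Matrix.head_cons,
        Pi.zero_apply] at this
      exact hhC this
    · intro h
      have := congrFun h 3
      simp only [Matrix.cons_val_three, Matrix.tail_cons, Matrix.head_cons,
        Pi.zero_apply] at this
      exact hhC this
    · rw [Fin.sum_univ_four]
      simp only [Matrix.cons_val_zero, Matrix.cons_val_one, Matrix.head_cons,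
        Matrix.cons_val_two, Matrix.tail_cons, Matrix.cons_val_three, _root_.map_mul,
        _root_.map_add, _root_.map_sub, map_neg, map_pow, Complex.conj_ofReal, Complex.conj_I,
        _root_.map_zero, map_ofNat]
      ring
    · rw [Fin.sum_univ_four]
      simp only [Matrix.cons_val_zero, Matrix.cons_val_one, Matrix.head_cons,
        Matrix.cons_val_two, Matrix.tail_cons, Matrix.cons_val_three, _root_.map_mul,
        _root_.map_add, _root_.map_sub, map_neg, map_pow, Complex.conj_ofReal, Complex.conj_I,
        _root_.map_zero, map_ofNat]
      ring
    · rw [Fin.sum_univ_four]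
      simp only [Matrix.cons_val_zero, Matrix.cons_val_one, Matrix.head_cons,
        Matrix.cons_val_two, Matrix.tail_cons, Matrix.cons_val_three, _root_.map_mul,
        _root_.map_add, _root_.map_sub, map_neg, map_pow, Complex.conj_ofReal, Complex.conj_I,
        _root_.map_zero, map_ofNat]
      linear_combination (Complex.I^2*((ξ1:ℂ)^2+(ξ2:ℂ)^2)) * hrC +
        (((ξ1:ℂ)^2+(ξ2:ℂ)^2+(F:ℂ)^2*(ξ3:ℂ)^2)*((ξ1:ℂ)^2+(ξ2:ℂ)^2)) * Complex.I_sq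
    · simp only [Matrix.cons_val_zero, Matrix.cons_val_one, Matrix.head_cons,
        Matrix.cons_val_two, Matrix.tail_cons]
      ring
    · simp only [Matrix.cons_val_zero, Matrix.cons_val_one, Matrix.head_cons,
        Matrix.cons_val_two, Matrix.tail_cons]
      ring
    · simp only [Matrix.cons_val_zero, Matrix.cons_val_one, Matrix.head_cons,
        Matrix.cons_val_two, Matrix.tail_cons]
      ring
    · exact span_divfree_aux ξ1 ξ2 ξ3 hξ _ _ _
        (by simp only [Matrix.cons_val_zero, Matrix.cons_val_one, Matrix.head_cons,
          Matrix.cons_val_two, Matrix.tail_cons]; ring)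
        (by simp only [Matrix.cons_val_zero, Matrix.cons_val_one, Matrix.head_cons,
          Matrix.cons_val_two, Matrix.tail_cons]; ring)
        (by simp only [Matrix.cons_val_zero, Matrix.cons_val_one, Matrix.head_cons,
          Matrix.cons_val_two, Matrix.tail_cons]; ring)
        hli
    · funext k
      fin_cases k <;>
        simp only [BmatC, Bmat, Matrix.mulVec, dotProduct, Fin.sum_univ_four,
          Matrix.map_apply, Matrix.of_apply, Matrix.cons_val', Matrix.cons_val_zero, Matrix.cons_val_one,
          Matrix.head_cons, Matrix.empty_val', Matrix.cons_val_fin_one, Matrix.head_fin_const,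
          Matrix.cons_val_two, Matrix.tail_cons, Matrix.cons_val_three,
          Pi.smul_apply, smul_eq_mul] <;>
        push_cast <;> field_simp <;> ring
    · rw [hlam]
      funext k
      fin_cases k
      · simp only [BmatC, Bmat, Matrix.mulVec, dotProduct, Fin.sum_univ_four,
          Matrix.map_apply, Matrix.of_apply, Matrix.cons_val', Matrix.cons_val_zero, Matrix.cons_val_one,
          Matrix.head_cons, Matrix.empty_val', Matrix.cons_val_fin_one, Matrix.head_fin_const,
          Matrix.cons_val_two, Matrix.tail_cons, Matrix.cons_val_three,
          Pi.smul_apply, smul_eq_mul]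
        push_cast
        field_simp
        linear_combination (Complex.I^2*(ξ1:ℂ)*(ξ3:ℂ)) * hrC +
          (((ξ1:ℂ)^2+(ξ2:ℂ)^2+(F:ℂ)^2*(ξ3:ℂ)^2)*(ξ1:ℂ)*(ξ3:ℂ)) * Complex.I_sq
      · simp only [BmatC, Bmat, Matrix.mulVec, dotProduct, Fin.sum_univ_four,
          Matrix.map_apply, Matrix.of_apply, Matrix.cons_val', Matrix.cons_val_zero, Matrix.cons_val_one,
          Matrix.head_cons, Matrix.empty_val', Matrix.cons_val_fin_one, Matrix.head_fin_const,
          Matrix.cons_val_two, Matrix.tail_cons, Matrix.cons_val_three,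
          Pi.smul_apply, smul_eq_mul]
        push_cast
        field_simp
        linear_combination (Complex.I^2*(ξ2:ℂ)*(ξ3:ℂ)) * hrC +
          (((ξ1:ℂ)^2+(ξ2:ℂ)^2+(F:ℂ)^2*(ξ3:ℂ)^2)*(ξ2:ℂ)*(ξ3:ℂ)) * Complex.I_sq
      · simp only [BmatC, Bmat, Matrix.mulVec, dotProduct, Fin.sum_univ_four,
          Matrix.map_apply, Matrix.of_apply, Matrix.cons_val', Matrix.cons_val_zero, Matrix.cons_val_one,
          Matrix.head_cons, Matrix.empty_val', Matrix.cons_val_fin_one, Matrix.head_fin_const,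
          Matrix.cons_val_two, Matrix.tail_cons, Matrix.cons_val_three,
          Pi.smul_apply, smul_eq_mul]
        push_cast
        field_simp
        linear_combination (-Complex.I^2*((ξ1:ℂ)^2+(ξ2:ℂ)^2)) * hrC +
          (-((ξ1:ℂ)^2+(ξ2:ℂ)^2+(F:ℂ)^2*(ξ3:ℂ)^2)*((ξ1:ℂ)^2+(ξ2:ℂ)^2)) * Complex.I_sq
      · simp only [BmatC, Bmat, Matrix.mulVec, dotProduct, Fin.sum_univ_four,
          Matrix.map_apply, Matrix.of_apply, Matrix.cons_val', Matrix.cons_val_zero, Matrix.cons_val_one,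
          Matrix.head_cons, Matrix.empty_val', Matrix.cons_val_fin_one, Matrix.head_fin_const,
          Matrix.cons_val_two, Matrix.tail_cons, Matrix.cons_val_three,
          Pi.smul_apply, smul_eq_mul]
        push_cast
        field_simp
        ring
    · rw [hlam]
      have hconj : starRingEnd ℂ (((-ν * (ξ1^2 + ξ2^2 + ξ3^2) : ℝ) : ℂ) +
          Complex.I * ((r / (ε * F) : ℝ) : ℂ)) =
          ((-ν * (ξ1^2 + ξ2^2 + ξ3^2) : ℝ) : ℂ) - Complex.I * ((r / (ε * F) : ℝ) : ℂ) := by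
        simp [_root_.map_add, _root_.map_mul, Complex.conj_ofReal, Complex.conj_I]
        ring
      rw [hconj]
      funext k
      fin_cases k
      · simp only [BmatC, Bmat, Matrix.mulVec, dotProduct, Fin.sum_univ_four,
          Matrix.map_apply, Matrix.of_apply, Matrix.cons_val', Matrix.cons_val_zero, Matrix.cons_val_one,
          Matrix.head_cons, Matrix.empty_val', Matrix.cons_val_fin_one, Matrix.head_fin_const,
          Matrix.cons_val_two, Matrix.tail_cons, Matrix.cons_val_three,
          Pi.smul_apply, smul_eq_mul]
        push_cast
        field_simp
        linear_combination (Complex.I^2*(ξ1:ℂ)*(ξ3:ℂ)) * hrC +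
          (((ξ1:ℂ)^2+(ξ2:ℂ)^2+(F:ℂ)^2*(ξ3:ℂ)^2)*(ξ1:ℂ)*(ξ3:ℂ)) * Complex.I_sq
      · simp only [BmatC, Bmat, Matrix.mulVec, dotProduct, Fin.sum_univ_four,
          Matrix.map_apply, Matrix.of_apply, Matrix.cons_val', Matrix.cons_val_zero, Matrix.cons_val_one,
          Matrix.head_cons, Matrix.empty_val', Matrix.cons_val_fin_one, Matrix.head_fin_const,
          Matrix.cons_val_two, Matrix.tail_cons, Matrix.cons_val_three,
          Pi.smul_apply, smul_eq_mul]
        push_cast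
        field_simp
        linear_combination (Complex.I^2*(ξ2:ℂ)*(ξ3:ℂ)) * hrC +
          (((ξ1:ℂ)^2+(ξ2:ℂ)^2+(F:ℂ)^2*(ξ3:ℂ)^2)*(ξ2:ℂ)*(ξ3:ℂ)) * Complex.I_sq
      · simp only [BmatC, Bmat, Matrix.mulVec, dotProduct, Fin.sum_univ_four,
          Matrix.map_apply, Matrix.of_apply, Matrix.cons_val', Matrix.cons_val_zero, Matrix.cons_val_one,
          Matrix.head_cons, Matrix.empty_val', Matrix.cons_val_fin_one, Matrix.head_fin_const,
          Matrix.cons_val_two, Matrix.tail_cons, Matrix.cons_val_three,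
          Pi.smul_apply, smul_eq_mul]
        push_cast
        field_simp
        linear_combination (-Complex.I^2*((ξ1:ℂ)^2+(ξ2:ℂ)^2)) * hrC +
          (-((ξ1:ℂ)^2+(ξ2:ℂ)^2+(F:ℂ)^2*(ξ3:ℂ)^2)*((ξ1:ℂ)^2+(ξ2:ℂ)^2)) * Complex.I_sq
      · simp only [BmatC, Bmat, Matrix.mulVec, dotProduct, Fin.sum_univ_four,
          Matrix.map_apply, Matrix.of_apply, Matrix.cons_val', Matrix.cons_val_zero, Matrix.cons_val_one,
          Matrix.head_cons, Matrix.empty_val', Matrix.cons_val_fin_one, Matrix.head_fin_const,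
          Matrix.cons_val_two, Matrix.tail_cons, Matrix.cons_val_three,
          Pi.smul_apply, smul_eq_mul]
        push_cast
        field_simp
        ring
end

section
/- For every z∈ℂ, the characteristic polynomial of (the complexification of) B(ξ,ε) satisfies det(z·I₄ − B(ξ,ε)) = (z+ν|ξ|²)² · ((z+ν|ξ|²)² + |ξ|_F²/(ε²F²|ξ|²)). In particular the eigenvalues of B(ξ,ε) over ℂ, counted with multiplicity, are −ν|ξ|² (twice) and −ν|ξ|² ± i|ξ|_F/(εF|ξ|). -/
set_option maxHeartbeats 1000000

open Matrix

theorem detFinFour (M : Matrix (Fin 4) (Fin 4) ℂ) :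
    M.det =
      M 0 0 * (M 1 1 * (M 2 2 * M 3 3 - M 2 3 * M 3 2) - M 1 2 * (M 2 1 * M 3 3 - M 2 3 * M 3 1) +
        M 1 3 * (M 2 1 * M 3 2 - M 2 2 * M 3 1)) -
      M 0 1 * (M 1 0 * (M 2 2 * M 3 3 - M 2 3 * M 3 2) - M 1 2 * (M 2 0 * M 3 3 - M 2 3 * M 3 0) +
        M 1 3 * (M 2 0 * M 3 2 - M 2 2 * M 3 0)) +
      M 0 2 * (M 1 0 * (M 2 1 * M 3 3 - M 2 3 * M 3 1) - M 1 1 * (M 2 0 * M 3 3 - M 2 3 * M 3 0) +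
        M 1 3 * (M 2 0 * M 3 1 - M 2 1 * M 3 0)) -
      M 0 3 * (M 1 0 * (M 2 1 * M 3 2 - M 2 2 * M 3 1) - M 1 1 * (M 2 0 * M 3 2 - M 2 2 * M 3 0) +
        M 1 2 * (M 2 0 * M 3 1 - M 2 1 * M 3 0)) := by
  rw [Matrix.det_succ_row_zero]
  simp [Fin.sum_univ_succ, Matrix.det_fin_three,
    show ((2:Fin 3).succ : Fin 4) = 3 by decide,
    show (Fin.succAbove (2:Fin 4) (2:Fin 3)) = 3 by decide,
    show (Fin.succAbove (1:Fin 4) (2:Fin 3)) = 3 by decide,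
    show (Fin.castSucc (2:Fin 3) : Fin 4) = 2 by decide,
    show (Fin.succAbove (3:Fin 4) (2:Fin 3)) = 2 by decide]
  ring

theorem polyKey (W x y t g : ℂ) :
    (!![W - x*y, -(y^2+t^2), 0, -(x*t*g);
        x^2+t^2, W + x*y, 0, -(y*t*g);
        -(y*t), x*t, W, (x^2+y^2)*g;
        0, 0, -((x^2+y^2+t^2)*g), W]).det
      = W^2 * (W^2 + (x^2+y^2+t^2) * ((x^2+y^2)*g^2 + t^2)) := by
  rw [detFinFour]
  simp
  ring

theorem scalarKey (s q X T e g F : ℂ) (hqXT : q = X + T) (hg : g = F⁻¹)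
    (hF : F ≠ 0) (he : e ≠ 0) (hq0 : q ≠ 0) :
    ((e*q)⁻¹)^4 * ((e*q*s)^2 * ((e*q*s)^2 + q*(X*g^2 + T))) =
      s^2 * (s^2 + (X + F^2*T)/(e^2*F^2*q)) := by
  subst hqXT hg
  have hXT : X + T ≠ 0 := hq0
  field_simp

/-- The characteristic polynomial of (the complexification of) `B(ξ,ε)`:
`det(z·I₄ − B(ξ,ε)) = (z+ν|ξ|²)²((z+ν|ξ|²)² + |ξ|_F²/(ε²F²|ξ|²))`.
In particular the complex eigenvalues, with multiplicity, are `−ν|ξ|²` (twice)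
and `−ν|ξ|² ± i|ξ|_F/(εF|ξ|)`. -/
theorem char_poly_Bmat
    (ν ε F ξ1 ξ2 ξ3 : ℝ) (hν : 0 < ν) (hε : 0 < ε) (hF : 0 < F)
    (hξ : ¬(ξ1 = 0 ∧ ξ2 = 0 ∧ ξ3 = 0)) :
    (∀ z : ℂ,
      (z • (1 : Matrix (Fin 4) (Fin 4) ℂ) - BmatC ν ε F ξ1 ξ2 ξ3).det =
        (z + ((ν * (ξ1^2 + ξ2^2 + ξ3^2) : ℝ) : ℂ))^2 *
          ((z + ((ν * (ξ1^2 + ξ2^2 + ξ3^2) : ℝ) : ℂ))^2 +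
            ((ξ1^2 + ξ2^2 + F^2 * ξ3^2 : ℝ) : ℂ) /
              ((ε^2 * F^2 * (ξ1^2 + ξ2^2 + ξ3^2) : ℝ) : ℂ))) ∧
    (∀ z : ℂ,
      (z = ((-ν * (ξ1^2 + ξ2^2 + ξ3^2) : ℝ) : ℂ) ∨
        z = ((-ν * (ξ1^2 + ξ2^2 + ξ3^2) : ℝ) : ℂ) +
          Complex.I * ((Real.sqrt (ξ1^2 + ξ2^2 + F^2 * ξ3^2) /
            (ε * F * Real.sqrt (ξ1^2 + ξ2^2 + ξ3^2)) : ℝ) : ℂ) ∨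
        z = ((-ν * (ξ1^2 + ξ2^2 + ξ3^2) : ℝ) : ℂ) -
          Complex.I * ((Real.sqrt (ξ1^2 + ξ2^2 + F^2 * ξ3^2) /
            (ε * F * Real.sqrt (ξ1^2 + ξ2^2 + ξ3^2)) : ℝ) : ℂ)) →
      (z • (1 : Matrix (Fin 4) (Fin 4) ℂ) - BmatC ν ε F ξ1 ξ2 ξ3).det = 0) := by
  have hQ : (0:ℝ) < ξ1^2 + ξ2^2 + ξ3^2 := by
    rcases not_and_or.1 hξ with h | h
    · positivity
    rcases not_and_or.1 h with h | h <;> positivity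
  have hqc0 : ((ξ1:ℂ)^2 + (ξ2:ℂ)^2 + (ξ3:ℂ)^2) ≠ 0 := by
    have : ((ξ1^2 + ξ2^2 + ξ3^2 : ℝ) : ℂ) ≠ 0 := by exact_mod_cast hQ.ne'
    push_cast at this; exact this
  have heC : ((ε:ℝ):ℂ) ≠ 0 := by exact_mod_cast hε.ne'
  have hFC : ((F:ℝ):ℂ) ≠ 0 := by exact_mod_cast hF.ne'
  have heq0 : ((ε:ℂ) * ((ξ1:ℂ)^2 + (ξ2:ℂ)^2 + (ξ3:ℂ)^2)) ≠ 0 := mul_ne_zero heC hqc0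
  have hmain : ∀ z : ℂ,
      (z • (1 : Matrix (Fin 4) (Fin 4) ℂ) - BmatC ν ε F ξ1 ξ2 ξ3).det =
        (z + ((ν * (ξ1^2 + ξ2^2 + ξ3^2) : ℝ) : ℂ))^2 *
          ((z + ((ν * (ξ1^2 + ξ2^2 + ξ3^2) : ℝ) : ℂ))^2 +
            ((ξ1^2 + ξ2^2 + F^2 * ξ3^2 : ℝ) : ℂ) /
              ((ε^2 * F^2 * (ξ1^2 + ξ2^2 + ξ3^2) : ℝ) : ℂ)) := by
    intro z
    set x : ℂ := (ξ1 : ℂ) with hx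
    set y : ℂ := (ξ2 : ℂ) with hy
    set t : ℂ := (ξ3 : ℂ) with ht
    set e : ℂ := (ε : ℂ) with he
    set f : ℂ := (F : ℂ) with hf
    set s : ℂ := z + ((ν * (ξ1^2 + ξ2^2 + ξ3^2) : ℝ) : ℂ) with hs
    have hM : z • (1 : Matrix (Fin 4) (Fin 4) ℂ) - BmatC ν ε F ξ1 ξ2 ξ3 =
        ((e * (x^2+y^2+t^2))⁻¹ : ℂ) •
          !![e * (x^2+y^2+t^2) * s - x*y, -(y^2+t^2), 0, -(x*t*f⁻¹);
             x^2+t^2, e * (x^2+y^2+t^2) * s + x*y, 0, -(y*t*f⁻¹);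
             -(y*t), x*t, e * (x^2+y^2+t^2) * s, (x^2+y^2)*f⁻¹;
             0, 0, -((x^2+y^2+t^2)*f⁻¹), e * (x^2+y^2+t^2) * s] := by
      ext i j
      fin_cases i <;> fin_cases j <;>
        simp only [BmatC, Bmat, Matrix.map_apply, Matrix.sub_apply, Matrix.smul_apply,
            Matrix.one_apply, Matrix.cons_val', Matrix.cons_val_zero, Matrix.cons_val_one,
            Matrix.head_cons, Matrix.cons_val_two, Matrix.cons_val_three, Matrix.head_fin_const,
            Matrix.empty_val', Matrix.cons_val_fin_one, Matrix.vecHead, Matrix.vecTail,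
            Matrix.of_apply, Function.comp, smul_eq_mul, Matrix.cons_val_succ, hs] <;>
        (try norm_num [Fin.ext_iff]) <;> (try push_cast) <;> (try simp only [← hx, ← hy, ← ht, ← he, ← hf]) <;> (try field_simp) <;> (try ring) <;> (try exact Or.inl trivial)
    rw [hM, Matrix.det_smul, polyKey, Fintype.card_fin]
    rw [scalarKey s (x^2+y^2+t^2) (x^2+y^2) (t^2) e f⁻¹ f (by ring) rfl hFC heC hqc0]
    push_cast
    ring
  refine ⟨hmain, ?_⟩
  intro z hz
  rw [hmain z]
  have hsq : ((Real.sqrt (ξ1^2 + ξ2^2 + F^2 * ξ3^2) /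
      (ε * F * Real.sqrt (ξ1^2 + ξ2^2 + ξ3^2)) : ℝ) : ℂ)^2 =
      ((ξ1^2 + ξ2^2 + F^2 * ξ3^2 : ℝ) : ℂ) /
        ((ε^2 * F^2 * (ξ1^2 + ξ2^2 + ξ3^2) : ℝ) : ℂ) := by
    have h1 : Real.sqrt (ξ1^2 + ξ2^2 + F^2 * ξ3^2) ^ 2 = ξ1^2 + ξ2^2 + F^2 * ξ3^2 :=
      Real.sq_sqrt (by positivity)
    have h2 : Real.sqrt (ξ1^2 + ξ2^2 + ξ3^2) ^ 2 = ξ1^2 + ξ2^2 + ξ3^2 :=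
      Real.sq_sqrt hQ.le
    have h3 : (Real.sqrt (ξ1^2 + ξ2^2 + F^2 * ξ3^2) /
        (ε * F * Real.sqrt (ξ1^2 + ξ2^2 + ξ3^2)))^2 =
        (ξ1^2 + ξ2^2 + F^2 * ξ3^2) / (ε^2 * F^2 * (ξ1^2 + ξ2^2 + ξ3^2)) := by
      rw [div_pow, mul_pow, mul_pow, h1, h2]
    exact_mod_cast congrArg (fun a : ℝ => (a : ℂ)) h3
  rcases hz with h | h | h <;> subst h
  · have h0 : ((-ν * (ξ1^2 + ξ2^2 + ξ3^2) : ℝ) : ℂ) + ((ν * (ξ1^2 + ξ2^2 + ξ3^2) : ℝ) : ℂ) = 0 := by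
      push_cast; ring
    rw [h0]; ring
  · have h0 : ((-ν * (ξ1^2 + ξ2^2 + ξ3^2) : ℝ) : ℂ) +
        Complex.I * ((Real.sqrt (ξ1^2 + ξ2^2 + F^2 * ξ3^2) /
          (ε * F * Real.sqrt (ξ1^2 + ξ2^2 + ξ3^2)) : ℝ) : ℂ) +
        ((ν * (ξ1^2 + ξ2^2 + ξ3^2) : ℝ) : ℂ) =
        Complex.I * ((Real.sqrt (ξ1^2 + ξ2^2 + F^2 * ξ3^2) /
          (ε * F * Real.sqrt (ξ1^2 + ξ2^2 + ξ3^2)) : ℝ) : ℂ) := by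
      push_cast; ring
    rw [h0, mul_pow, Complex.I_sq, hsq]; ring
  · have h0 : ((-ν * (ξ1^2 + ξ2^2 + ξ3^2) : ℝ) : ℂ) -
        Complex.I * ((Real.sqrt (ξ1^2 + ξ2^2 + F^2 * ξ3^2) /
          (ε * F * Real.sqrt (ξ1^2 + ξ2^2 + ξ3^2)) : ℝ) : ℂ) +
        ((ν * (ξ1^2 + ξ2^2 + ξ3^2) : ℝ) : ℂ) =
        -(Complex.I * ((Real.sqrt (ξ1^2 + ξ2^2 + F^2 * ξ3^2) /
          (ε * F * Real.sqrt (ξ1^2 + ξ2^2 + ξ3^2)) : ℝ) : ℂ)) := by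
      push_cast; ring
    rw [h0, neg_pow, mul_pow, Complex.I_sq, hsq]; ring
end

section
/- The function g_F: ℝ³∖{0}→ℝ defined by g_F(ξ) = |ξ|_F/|ξ| = √(ξ₁²+ξ₂²+F²ξ₃²)/√(ξ₁²+ξ₂²+ξ₃²) is smooth on ℝ³∖{0}, and for every ξ≠0 its Hessian matrix (∂ᵢ∂ⱼ g_F(ξ))_{1≤i,j≤3} is equal to the explicit matrix M(ξ). -/
open Matrix

/-- `g_F(ξ) = |ξ|_F/|ξ|`. -/
noncomputable def gF (F : ℝ) (x : Fin 3 → ℝ) : ℝ :=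
  Real.sqrt (x 0 ^ 2 + x 1 ^ 2 + F ^ 2 * x 2 ^ 2) /
    Real.sqrt (x 0 ^ 2 + x 1 ^ 2 + x 2 ^ 2)

set_option maxHeartbeats 1000000

noncomputable def Pf (F : ℝ) (x : Fin 3 → ℝ) : ℝ := x 0 ^ 2 + x 1 ^ 2 + F ^ 2 * x 2 ^ 2
noncomputable def Qf (x : Fin 3 → ℝ) : ℝ := x 0 ^ 2 + x 1 ^ 2 + x 2 ^ 2

lemma Qf_pos {x : Fin 3 → ℝ} (hx : x ≠ 0) : 0 < Qf x := by
  rcases (show 0 ≤ Qf x by unfold Qf; positivity).lt_or_eq with h | h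
  · exact h
  · exfalso; apply hx
    unfold Qf at h
    have h0 : x 0 ^ 2 = 0 := by nlinarith [sq_nonneg (x 0), sq_nonneg (x 1), sq_nonneg (x 2)]
    have h1 : x 1 ^ 2 = 0 := by nlinarith [sq_nonneg (x 0), sq_nonneg (x 1), sq_nonneg (x 2)]
    have h2 : x 2 ^ 2 = 0 := by nlinarith [sq_nonneg (x 0), sq_nonneg (x 1), sq_nonneg (x 2)]
    rw [pow_eq_zero_iff two_ne_zero] at h0 h1 h2
    funext i; fin_cases i <;> simpa
lemma Pf_pos {F : ℝ} (hF : 0 < F) {x : Fin 3 → ℝ} (hx : x ≠ 0) : 0 < Pf F x := by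
  rcases (show 0 ≤ Pf F x by unfold Pf; positivity).lt_or_eq with h | h
  · exact h
  · exfalso; apply hx
    unfold Pf at h
    have hF2 : 0 < F ^ 2 := by positivity
    have h0 : x 0 ^ 2 = 0 := by nlinarith [sq_nonneg (x 0), sq_nonneg (x 1), sq_nonneg (x 2)]
    have h1 : x 1 ^ 2 = 0 := by nlinarith [sq_nonneg (x 0), sq_nonneg (x 1), sq_nonneg (x 2)]
    have h2 : x 2 ^ 2 = 0 := by nlinarith [sq_nonneg (x 0), sq_nonneg (x 1), sq_nonneg (x 2)]
    rw [pow_eq_zero_iff two_ne_zero] at h0 h1 h2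
    funext i; fin_cases i <;> simpa

lemma fderiv_line {f : (Fin 3 → ℝ) → ℝ} {y : Fin 3 → ℝ} (hf : DifferentiableAt ℝ f y)
    (v : Fin 3 → ℝ) : HasDerivAt (fun t : ℝ => f (y + t • v)) (fderiv ℝ f y v) 0 := by
  have h1 : HasDerivAt (fun t : ℝ => y + t • v) v 0 := by
    simpa using ((hasDerivAt_id (0:ℝ)).smul_const v).const_add y
  have h2 : HasFDerivAt f (fderiv ℝ f y) (y + (0:ℝ) • v) := by
    simpa using hf.hasFDerivAt
  exact h2.comp_hasDerivAt (0:ℝ) h1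

lemma quad_deriv (A B C : ℝ) : HasDerivAt (fun t : ℝ => A + B * t + C * t ^ 2) B 0 := by
  have := (((hasDerivAt_id (0:ℝ)).const_mul B).add
      (((hasDerivAt_id (0:ℝ)).pow 2).const_mul C)).const_add A
  convert this using 2
  · rfl
  · rfl
  all_goals simp <;> ring

/-- derivative of `t ↦ √p(t)/√q(t)` at 0 for quadratics `p, q`. -/
lemma key1 (pA pB pC qA qB qC : ℝ) (hp : 0 < pA) (hq : 0 < qA) :
    HasDerivAt (fun t : ℝ => Real.sqrt (pA + pB * t + pC * t ^ 2) /
        Real.sqrt (qA + qB * t + qC * t ^ 2))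
      ((pB * qA - qB * pA) / (2 * Real.sqrt pA * Real.sqrt qA * qA)) 0 := by
  have hsp : HasDerivAt (fun t : ℝ => Real.sqrt (pA + pB * t + pC * t ^ 2))
      (pB / (2 * Real.sqrt pA)) 0 := by
    have := (quad_deriv pA pB pC).sqrt (by simpa using hp.ne')
    simpa using this
  have hsq : HasDerivAt (fun t : ℝ => Real.sqrt (qA + qB * t + qC * t ^ 2))
      (qB / (2 * Real.sqrt qA)) 0 := by
    have := (quad_deriv qA qB qC).sqrt (by simpa using hq.ne')
    simpa using this
  have hA : 0 < Real.sqrt pA := Real.sqrt_pos.mpr hp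
  have hB : 0 < Real.sqrt qA := Real.sqrt_pos.mpr hq
  have hd := hsp.div hsq (by simpa using hB.ne')
  have ha2 : Real.sqrt pA ^ 2 = pA := Real.sq_sqrt hp.le
  have hb2 : Real.sqrt qA ^ 2 = qA := Real.sq_sqrt hq.le
  refine hd.congr_deriv ?_
  rw [show pA + pB * 0 + pC * 0 ^ 2 = pA by ring, show qA + qB * 0 + qC * 0 ^ 2 = qA by ring]
  set a := Real.sqrt pA with ha
  set b := Real.sqrt qA with hb
  rw [← ha2, ← hb2]
  field_simp

/-- derivative of `t ↦ n(t)/(√p(t) · √q(t)³)` at 0 for quadratics `n, p, q`. -/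
lemma key2 (nA nB nC pA pB pC qA qB qC : ℝ) (hp : 0 < pA) (hq : 0 < qA) :
    HasDerivAt (fun t : ℝ => (nA + nB * t + nC * t ^ 2) /
        (Real.sqrt (pA + pB * t + pC * t ^ 2) * Real.sqrt (qA + qB * t + qC * t ^ 2) ^ 3))
      ((nB - nA * (pB / (2 * pA) + 3 * qB / (2 * qA))) / (Real.sqrt pA * Real.sqrt qA ^ 3))
      0 := by
  have hsp : HasDerivAt (fun t : ℝ => Real.sqrt (pA + pB * t + pC * t ^ 2))
      (pB / (2 * Real.sqrt pA)) 0 := by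
    have := (quad_deriv pA pB pC).sqrt (by simpa using hp.ne')
    simpa using this
  have hsq : HasDerivAt (fun t : ℝ => Real.sqrt (qA + qB * t + qC * t ^ 2))
      (qB / (2 * Real.sqrt qA)) 0 := by
    have := (quad_deriv qA qB qC).sqrt (by simpa using hq.ne')
    simpa using this
  have hA : 0 < Real.sqrt pA := Real.sqrt_pos.mpr hp
  have hB : 0 < Real.sqrt qA := Real.sqrt_pos.mpr hq
  have ha2 : Real.sqrt pA ^ 2 = pA := Real.sq_sqrt hp.le
  have hb2 : Real.sqrt qA ^ 2 = qA := Real.sq_sqrt hq.le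
  have hq3 := hsq.pow 3
  have hden := hsp.mul hq3
  have hnum := quad_deriv nA nB nC
  have hd := hnum.div hden (by
    have : (0:ℝ) < Real.sqrt (pA + pB * 0 + pC * 0 ^ 2) *
        Real.sqrt (qA + qB * 0 + qC * 0 ^ 2) ^ 3 := by
      rw [show pA + pB * 0 + pC * 0 ^ 2 = pA by ring, show qA + qB * 0 + qC * 0 ^ 2 = qA by ring]
      positivity
    exact this.ne')
  refine hd.congr_deriv ?_
  simp only [Pi.mul_apply, Pi.pow_apply]
  rw [show pA + pB * 0 + pC * 0 ^ 2 = pA by ring, show qA + qB * 0 + qC * 0 ^ 2 = qA by ring,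
    show nA + nB * 0 + nC * 0 ^ 2 = nA by ring]
  set a := Real.sqrt pA with ha
  set b := Real.sqrt qA with hb
  rw [← ha2, ← hb2]
  push_cast
  field_simp

lemma contDiffAt_gF {F : ℝ} (hF : 0 < F) {x : Fin 3 → ℝ} (hx : x ≠ 0) :
    ContDiffAt ℝ (⊤ : ℕ∞) (gF F) x := by
  have hP := Pf_pos hF hx
  have hQ := Qf_pos hx
  have hPc : ContDiffAt ℝ (⊤ : ℕ∞) (fun y : Fin 3 → ℝ => y 0 ^ 2 + y 1 ^ 2 + F ^ 2 * y 2 ^ 2) x := by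
    fun_prop
  have hQc : ContDiffAt ℝ (⊤ : ℕ∞) (fun y : Fin 3 → ℝ => y 0 ^ 2 + y 1 ^ 2 + y 2 ^ 2) x := by
    fun_prop
  have h1 : ContDiffAt ℝ (⊤ : ℕ∞) (fun y : Fin 3 → ℝ =>
      Real.sqrt (y 0 ^ 2 + y 1 ^ 2 + F ^ 2 * y 2 ^ 2)) x :=
    (Real.contDiffAt_sqrt (by unfold Pf at hP; exact hP.ne')).comp x hPc
  have h2 : ContDiffAt ℝ (⊤ : ℕ∞) (fun y : Fin 3 → ℝ =>
      Real.sqrt (y 0 ^ 2 + y 1 ^ 2 + y 2 ^ 2)) x :=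
    (Real.contDiffAt_sqrt (by unfold Qf at hQ; exact hQ.ne')).comp x hQc
  exact h1.div h2 (by
    have : 0 < Real.sqrt (x 0 ^ 2 + x 1 ^ 2 + x 2 ^ 2) :=
      Real.sqrt_pos.mpr (by unfold Qf at hQ; exact hQ)
    exact this.ne')

noncomputable def cpart (F : ℝ) (j : Fin 3) (y : Fin 3 → ℝ) : ℝ :=
  (if j = 2 then -(1 - F ^ 2) * y 2 * (y 0 ^ 2 + y 1 ^ 2) else (1 - F ^ 2) * y j * y 2 ^ 2) /
    (Real.sqrt (y 0 ^ 2 + y 1 ^ 2 + F ^ 2 * y 2 ^ 2) *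
      Real.sqrt (y 0 ^ 2 + y 1 ^ 2 + y 2 ^ 2) ^ 3)

lemma fderiv_gF_apply {F : ℝ} (hF : 0 < F) {y : Fin 3 → ℝ} (hy : y ≠ 0) (j : Fin 3) :
    fderiv ℝ (gF F) y (Pi.single j 1) = cpart F j y := by
  have hP := Pf_pos hF hy
  have hQ := Qf_pos hy
  have hPu : (0:ℝ) < y 0 ^ 2 + y 1 ^ 2 + F ^ 2 * y 2 ^ 2 := hP
  have hQu : (0:ℝ) < y 0 ^ 2 + y 1 ^ 2 + y 2 ^ 2 := hQ
  have ha : 0 < Real.sqrt (y 0 ^ 2 + y 1 ^ 2 + F ^ 2 * y 2 ^ 2) := Real.sqrt_pos.mpr hPu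
  have hb : 0 < Real.sqrt (y 0 ^ 2 + y 1 ^ 2 + y 2 ^ 2) := Real.sqrt_pos.mpr hQu
  have ha2 : Real.sqrt (y 0 ^ 2 + y 1 ^ 2 + F ^ 2 * y 2 ^ 2) ^ 2
      = y 0 ^ 2 + y 1 ^ 2 + F ^ 2 * y 2 ^ 2 := Real.sq_sqrt hPu.le
  have hb2 : Real.sqrt (y 0 ^ 2 + y 1 ^ 2 + y 2 ^ 2) ^ 2
      = y 0 ^ 2 + y 1 ^ 2 + y 2 ^ 2 := Real.sq_sqrt hQu.le
  have hdiff : DifferentiableAt ℝ (gF F) y :=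
    (contDiffAt_gF hF hy).differentiableAt (by simp)
  fin_cases j
  · show fderiv ℝ (gF F) y (Pi.single (0:Fin 3) 1) = cpart F 0 y
    have hd := fderiv_line hdiff ((Pi.single (0:Fin 3) (1:ℝ) : Fin 3 → ℝ))
    have heq : (fun t : ℝ => gF F (y + t • ((Pi.single (0:Fin 3) (1:ℝ) : Fin 3 → ℝ)))) =
        fun t : ℝ => Real.sqrt ((y 0 ^ 2 + y 1 ^ 2 + F ^ 2 * y 2 ^ 2) + (2 * y 0) * t + 1 * t ^ 2)
          / Real.sqrt ((y 0 ^ 2 + y 1 ^ 2 + y 2 ^ 2) + (2 * y 0) * t + 1 * t ^ 2) := by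
      funext t
      unfold gF
      simp [Pi.single_apply]
      ring_nf
    rw [heq] at hd
    rw [hd.unique (key1 _ _ _ _ _ _ hPu hQu)]
    simp only [cpart]
    rw [if_neg (by decide)]
    set a := Real.sqrt (y 0 ^ 2 + y 1 ^ 2 + F ^ 2 * y 2 ^ 2) with hha
    set b := Real.sqrt (y 0 ^ 2 + y 1 ^ 2 + y 2 ^ 2) with hhb
    rw [show 2 * y 0 * (y 0 ^ 2 + y 1 ^ 2 + y 2 ^ 2) - 2 * y 0 * (y 0 ^ 2 + y 1 ^ 2 + F ^ 2 * y 2 ^ 2) = 2 * y 0 * ((1 - F ^ 2) * y 2 ^ 2) from by ring]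
    rw [← hb2]
    field_simp
  · show fderiv ℝ (gF F) y (Pi.single (1:Fin 3) 1) = cpart F 1 y
    have hd := fderiv_line hdiff ((Pi.single (1:Fin 3) (1:ℝ) : Fin 3 → ℝ))
    have heq : (fun t : ℝ => gF F (y + t • ((Pi.single (1:Fin 3) (1:ℝ) : Fin 3 → ℝ)))) =
        fun t : ℝ => Real.sqrt ((y 0 ^ 2 + y 1 ^ 2 + F ^ 2 * y 2 ^ 2) + (2 * y 1) * t + 1 * t ^ 2)
          / Real.sqrt ((y 0 ^ 2 + y 1 ^ 2 + y 2 ^ 2) + (2 * y 1) * t + 1 * t ^ 2) := by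
      funext t
      unfold gF
      simp [Pi.single_apply]
      ring_nf
    rw [heq] at hd
    rw [hd.unique (key1 _ _ _ _ _ _ hPu hQu)]
    simp only [cpart]
    rw [if_neg (by decide)]
    set a := Real.sqrt (y 0 ^ 2 + y 1 ^ 2 + F ^ 2 * y 2 ^ 2) with hha
    set b := Real.sqrt (y 0 ^ 2 + y 1 ^ 2 + y 2 ^ 2) with hhb
    rw [show 2 * y 1 * (y 0 ^ 2 + y 1 ^ 2 + y 2 ^ 2) - 2 * y 1 * (y 0 ^ 2 + y 1 ^ 2 + F ^ 2 * y 2 ^ 2) = 2 * y 1 * ((1 - F ^ 2) * y 2 ^ 2) from by ring]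
    rw [← hb2]
    field_simp
  · show fderiv ℝ (gF F) y (Pi.single (2:Fin 3) 1) = cpart F 2 y
    have hd := fderiv_line hdiff ((Pi.single (2:Fin 3) (1:ℝ) : Fin 3 → ℝ))
    have heq : (fun t : ℝ => gF F (y + t • ((Pi.single (2:Fin 3) (1:ℝ) : Fin 3 → ℝ)))) =
        fun t : ℝ => Real.sqrt ((y 0 ^ 2 + y 1 ^ 2 + F ^ 2 * y 2 ^ 2) + (2 * F ^ 2 * y 2) * t + F ^ 2 * t ^ 2)
          / Real.sqrt ((y 0 ^ 2 + y 1 ^ 2 + y 2 ^ 2) + (2 * y 2) * t + 1 * t ^ 2) := by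
      funext t
      unfold gF
      simp [Pi.single_apply]
      ring_nf
    rw [heq] at hd
    rw [hd.unique (key1 _ _ _ _ _ _ hPu hQu)]
    simp only [cpart]
    rw [if_true]
    set a := Real.sqrt (y 0 ^ 2 + y 1 ^ 2 + F ^ 2 * y 2 ^ 2) with hha
    set b := Real.sqrt (y 0 ^ 2 + y 1 ^ 2 + y 2 ^ 2) with hhb
    rw [show 2 * F ^ 2 * y 2 * (y 0 ^ 2 + y 1 ^ 2 + y 2 ^ 2) - 2 * y 2 * (y 0 ^ 2 + y 1 ^ 2 + F ^ 2 * y 2 ^ 2) = 2 * y 2 * (-((1 - F ^ 2)) * (y 0 ^ 2 + y 1 ^ 2)) from by ring]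
    rw [← hb2]
    field_simp

lemma cpart_differentiableAt {F : ℝ} (hF : 0 < F) {x : Fin 3 → ℝ} (hx : x ≠ 0) (j : Fin 3) :
    DifferentiableAt ℝ (cpart F j) x := by
  have hPu : (0:ℝ) < x 0 ^ 2 + x 1 ^ 2 + F ^ 2 * x 2 ^ 2 := Pf_pos hF hx
  have hQu : (0:ℝ) < x 0 ^ 2 + x 1 ^ 2 + x 2 ^ 2 := Qf_pos hx
  have h1 : DifferentiableAt ℝ
      (fun y : Fin 3 → ℝ => Real.sqrt (y 0 ^ 2 + y 1 ^ 2 + F ^ 2 * y 2 ^ 2)) x := by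
    have hc : ContDiffAt ℝ (⊤ : ℕ∞)
        (fun y : Fin 3 → ℝ => Real.sqrt (y 0 ^ 2 + y 1 ^ 2 + F ^ 2 * y 2 ^ 2)) x :=
      (Real.contDiffAt_sqrt hPu.ne').comp x (by fun_prop)
    exact hc.differentiableAt (by simp)
  have h2 : DifferentiableAt ℝ
      (fun y : Fin 3 → ℝ => Real.sqrt (y 0 ^ 2 + y 1 ^ 2 + y 2 ^ 2)) x := by
    have hc : ContDiffAt ℝ (⊤ : ℕ∞)
        (fun y : Fin 3 → ℝ => Real.sqrt (y 0 ^ 2 + y 1 ^ 2 + y 2 ^ 2)) x :=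
      (Real.contDiffAt_sqrt hQu.ne').comp x (by fun_prop)
    exact hc.differentiableAt (by simp)
  unfold cpart
  have hnum : DifferentiableAt ℝ (fun y : Fin 3 → ℝ =>
      (if j = 2 then -(1 - F ^ 2) * y 2 * (y 0 ^ 2 + y 1 ^ 2)
        else (1 - F ^ 2) * y j * y 2 ^ 2)) x := by
    split_ifs with hj <;> fun_prop
  simp only [div_eq_mul_inv]
  exact hnum.mul ((h1.mul (h2.pow 3)).inv
    (mul_ne_zero (Real.sqrt_pos.mpr hPu).ne' (pow_ne_zero 3 (Real.sqrt_pos.mpr hQu).ne')))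



/-- The explicit candidate Hessian matrix `M(ξ)` of `g_F`. -/
noncomputable def Mmat (F : ℝ) (x : Fin 3 → ℝ) : Matrix (Fin 3) (Fin 3) ℝ :=
  ((1 - F ^ 2) /
      ((Real.sqrt (x 0 ^ 2 + x 1 ^ 2 + x 2 ^ 2)) ^ 3 *
        Real.sqrt (x 0 ^ 2 + x 1 ^ 2 + F ^ 2 * x 2 ^ 2))) •
    !![x 2 ^ 2 * (1 - x 0 ^ 2 * (3 / (x 0 ^ 2 + x 1 ^ 2 + x 2 ^ 2) +
        1 / (x 0 ^ 2 + x 1 ^ 2 + F ^ 2 * x 2 ^ 2))),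
      -(x 0 * x 1 * x 2 ^ 2) * (3 / (x 0 ^ 2 + x 1 ^ 2 + x 2 ^ 2) +
        1 / (x 0 ^ 2 + x 1 ^ 2 + F ^ 2 * x 2 ^ 2)),
      x 0 * x 2 * (2 - x 2 ^ 2 * (3 / (x 0 ^ 2 + x 1 ^ 2 + x 2 ^ 2) +
        F ^ 2 / (x 0 ^ 2 + x 1 ^ 2 + F ^ 2 * x 2 ^ 2)));
      -(x 0 * x 1 * x 2 ^ 2) * (3 / (x 0 ^ 2 + x 1 ^ 2 + x 2 ^ 2) +
        1 / (x 0 ^ 2 + x 1 ^ 2 + F ^ 2 * x 2 ^ 2)),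
      x 2 ^ 2 * (1 - x 1 ^ 2 * (3 / (x 0 ^ 2 + x 1 ^ 2 + x 2 ^ 2) +
        1 / (x 0 ^ 2 + x 1 ^ 2 + F ^ 2 * x 2 ^ 2))),
      x 1 * x 2 * (2 - x 2 ^ 2 * (3 / (x 0 ^ 2 + x 1 ^ 2 + x 2 ^ 2) +
        F ^ 2 / (x 0 ^ 2 + x 1 ^ 2 + F ^ 2 * x 2 ^ 2)));
      x 0 * x 2 * (2 - x 2 ^ 2 * (3 / (x 0 ^ 2 + x 1 ^ 2 + x 2 ^ 2) +
        F ^ 2 / (x 0 ^ 2 + x 1 ^ 2 + F ^ 2 * x 2 ^ 2))),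
      x 1 * x 2 * (2 - x 2 ^ 2 * (3 / (x 0 ^ 2 + x 1 ^ 2 + x 2 ^ 2) +
        F ^ 2 / (x 0 ^ 2 + x 1 ^ 2 + F ^ 2 * x 2 ^ 2))),
      -(x 0 ^ 2 + x 1 ^ 2) * (1 - x 2 ^ 2 * (3 / (x 0 ^ 2 + x 1 ^ 2 + x 2 ^ 2) +
        F ^ 2 / (x 0 ^ 2 + x 1 ^ 2 + F ^ 2 * x 2 ^ 2)))]

/-- `g_F` is smooth away from the origin, and its Hessian matrix at every `ξ ≠ 0`
is the explicit matrix `M(ξ)`. -/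
theorem gF_smooth_and_hessian (F : ℝ) (hF : 0 < F) :
    ContDiffOn ℝ (⊤ : ℕ∞) (gF F) {x : Fin 3 → ℝ | x ≠ 0} ∧
    ∀ x : Fin 3 → ℝ, x ≠ 0 → ∀ i j : Fin 3,
      fderiv ℝ (fun y => fderiv ℝ (gF F) y (Pi.single j 1)) x (Pi.single i 1) =
        Mmat F x i j := by
  constructor
  · exact fun x hx => (contDiffAt_gF hF hx).contDiffWithinAt
  intro x hx i j
  have hPu : (0:ℝ) < x 0 ^ 2 + x 1 ^ 2 + F ^ 2 * x 2 ^ 2 := Pf_pos hF hx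
  have hQu : (0:ℝ) < x 0 ^ 2 + x 1 ^ 2 + x 2 ^ 2 := Qf_pos hx
  have hev : (fun y => fderiv ℝ (gF F) y (Pi.single j 1)) =ᶠ[nhds x] cpart F j := by
    filter_upwards [eventually_ne_nhds hx] with y hy
    exact fderiv_gF_apply hF hy j
  rw [show fderiv ℝ (fun y => fderiv ℝ (gF F) y (Pi.single j 1)) x = fderiv ℝ (cpart F j) x from
    hev.fderiv_eq]
  fin_cases i <;> fin_cases j
  · show fderiv ℝ (cpart F (0:Fin 3)) x (Pi.single (0:Fin 3) 1) = Mmat F x 0 0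
    have hd := fderiv_line (cpart_differentiableAt hF hx (0:Fin 3))
      ((Pi.single (0:Fin 3) (1:ℝ) : Fin 3 → ℝ))
    have heq : (fun t : ℝ => cpart F (0:Fin 3) (x + t • (Pi.single (0:Fin 3) (1:ℝ) : Fin 3 → ℝ))) =
        fun t : ℝ => (((1 - F ^ 2) * x 0 * x 2 ^ 2) + ((1 - F ^ 2) * x 2 ^ 2) * t + (0) * t ^ 2) /
          (Real.sqrt ((x 0 ^ 2 + x 1 ^ 2 + F ^ 2 * x 2 ^ 2) + (2 * x 0) * t + (1) * t ^ 2) *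
            Real.sqrt ((x 0 ^ 2 + x 1 ^ 2 + x 2 ^ 2) + (2 * x 0) * t + (1) * t ^ 2) ^ 3) := by
      funext t
      simp [cpart, Pi.single_apply]
      ring_nf
    rw [heq] at hd
    rw [hd.unique (key2 _ _ _ _ _ _ _ _ _ hPu hQu)]
    simp only [Mmat, Matrix.smul_apply, Matrix.of_apply, Matrix.cons_val', Matrix.cons_val_zero,
      Matrix.cons_val_one, Matrix.head_cons, Matrix.empty_val', Matrix.cons_val_fin_one,
      Matrix.head_fin_const, Matrix.cons_val_two, Matrix.tail_cons, smul_eq_mul]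
    set a := Real.sqrt (x 0 ^ 2 + x 1 ^ 2 + F ^ 2 * x 2 ^ 2) with hha
    set b := Real.sqrt (x 0 ^ 2 + x 1 ^ 2 + x 2 ^ 2) with hhb
    have ha : 0 < a := Real.sqrt_pos.mpr hPu
    have hb : 0 < b := Real.sqrt_pos.mpr hQu
    field_simp
    ring
  · show fderiv ℝ (cpart F (1:Fin 3)) x (Pi.single (0:Fin 3) 1) = Mmat F x 0 1
    have hd := fderiv_line (cpart_differentiableAt hF hx (1:Fin 3))
      ((Pi.single (0:Fin 3) (1:ℝ) : Fin 3 → ℝ))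
    have heq : (fun t : ℝ => cpart F (1:Fin 3) (x + t • (Pi.single (0:Fin 3) (1:ℝ) : Fin 3 → ℝ))) =
        fun t : ℝ => (((1 - F ^ 2) * x 1 * x 2 ^ 2) + (0) * t + (0) * t ^ 2) /
          (Real.sqrt ((x 0 ^ 2 + x 1 ^ 2 + F ^ 2 * x 2 ^ 2) + (2 * x 0) * t + (1) * t ^ 2) *
            Real.sqrt ((x 0 ^ 2 + x 1 ^ 2 + x 2 ^ 2) + (2 * x 0) * t + (1) * t ^ 2) ^ 3) := by
      funext t
      simp [cpart, Pi.single_apply]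
      ring_nf
    rw [heq] at hd
    rw [hd.unique (key2 _ _ _ _ _ _ _ _ _ hPu hQu)]
    simp only [Mmat, Matrix.smul_apply, Matrix.of_apply, Matrix.cons_val', Matrix.cons_val_zero,
      Matrix.cons_val_one, Matrix.head_cons, Matrix.empty_val', Matrix.cons_val_fin_one,
      Matrix.head_fin_const, Matrix.cons_val_two, Matrix.tail_cons, smul_eq_mul]
    set a := Real.sqrt (x 0 ^ 2 + x 1 ^ 2 + F ^ 2 * x 2 ^ 2) with hha
    set b := Real.sqrt (x 0 ^ 2 + x 1 ^ 2 + x 2 ^ 2) with hhb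
    have ha : 0 < a := Real.sqrt_pos.mpr hPu
    have hb : 0 < b := Real.sqrt_pos.mpr hQu
    field_simp
    ring
  · show fderiv ℝ (cpart F (2:Fin 3)) x (Pi.single (0:Fin 3) 1) = Mmat F x 0 2
    have hd := fderiv_line (cpart_differentiableAt hF hx (2:Fin 3))
      ((Pi.single (0:Fin 3) (1:ℝ) : Fin 3 → ℝ))
    have heq : (fun t : ℝ => cpart F (2:Fin 3) (x + t • (Pi.single (0:Fin 3) (1:ℝ) : Fin 3 → ℝ))) =
        fun t : ℝ => ((-(1 - F ^ 2) * x 2 * (x 0 ^ 2 + x 1 ^ 2)) + (-(2 * (1 - F ^ 2) * x 2 * x 0)) * t + (-((1 - F ^ 2) * x 2)) * t ^ 2) /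
          (Real.sqrt ((x 0 ^ 2 + x 1 ^ 2 + F ^ 2 * x 2 ^ 2) + (2 * x 0) * t + (1) * t ^ 2) *
            Real.sqrt ((x 0 ^ 2 + x 1 ^ 2 + x 2 ^ 2) + (2 * x 0) * t + (1) * t ^ 2) ^ 3) := by
      funext t
      simp [cpart, Pi.single_apply]
      ring_nf
    rw [heq] at hd
    rw [hd.unique (key2 _ _ _ _ _ _ _ _ _ hPu hQu)]
    simp only [Mmat, Matrix.smul_apply, Matrix.of_apply, Matrix.cons_val', Matrix.cons_val_zero,
      Matrix.cons_val_one, Matrix.head_cons, Matrix.empty_val', Matrix.cons_val_fin_one,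
      Matrix.head_fin_const, Matrix.cons_val_two, Matrix.tail_cons, smul_eq_mul]
    set a := Real.sqrt (x 0 ^ 2 + x 1 ^ 2 + F ^ 2 * x 2 ^ 2) with hha
    set b := Real.sqrt (x 0 ^ 2 + x 1 ^ 2 + x 2 ^ 2) with hhb
    have ha : 0 < a := Real.sqrt_pos.mpr hPu
    have hb : 0 < b := Real.sqrt_pos.mpr hQu
    field_simp
    ring
  · show fderiv ℝ (cpart F (0:Fin 3)) x (Pi.single (1:Fin 3) 1) = Mmat F x 1 0
    have hd := fderiv_line (cpart_differentiableAt hF hx (0:Fin 3))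
      ((Pi.single (1:Fin 3) (1:ℝ) : Fin 3 → ℝ))
    have heq : (fun t : ℝ => cpart F (0:Fin 3) (x + t • (Pi.single (1:Fin 3) (1:ℝ) : Fin 3 → ℝ))) =
        fun t : ℝ => (((1 - F ^ 2) * x 0 * x 2 ^ 2) + (0) * t + (0) * t ^ 2) /
          (Real.sqrt ((x 0 ^ 2 + x 1 ^ 2 + F ^ 2 * x 2 ^ 2) + (2 * x 1) * t + (1) * t ^ 2) *
            Real.sqrt ((x 0 ^ 2 + x 1 ^ 2 + x 2 ^ 2) + (2 * x 1) * t + (1) * t ^ 2) ^ 3) := by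
      funext t
      simp [cpart, Pi.single_apply]
      ring_nf
    rw [heq] at hd
    rw [hd.unique (key2 _ _ _ _ _ _ _ _ _ hPu hQu)]
    simp only [Mmat, Matrix.smul_apply, Matrix.of_apply, Matrix.cons_val', Matrix.cons_val_zero,
      Matrix.cons_val_one, Matrix.head_cons, Matrix.empty_val', Matrix.cons_val_fin_one,
      Matrix.head_fin_const, Matrix.cons_val_two, Matrix.tail_cons, smul_eq_mul]
    set a := Real.sqrt (x 0 ^ 2 + x 1 ^ 2 + F ^ 2 * x 2 ^ 2) with hha
    set b := Real.sqrt (x 0 ^ 2 + x 1 ^ 2 + x 2 ^ 2) with hhb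
    have ha : 0 < a := Real.sqrt_pos.mpr hPu
    have hb : 0 < b := Real.sqrt_pos.mpr hQu
    field_simp
    ring
  · show fderiv ℝ (cpart F (1:Fin 3)) x (Pi.single (1:Fin 3) 1) = Mmat F x 1 1
    have hd := fderiv_line (cpart_differentiableAt hF hx (1:Fin 3))
      ((Pi.single (1:Fin 3) (1:ℝ) : Fin 3 → ℝ))
    have heq : (fun t : ℝ => cpart F (1:Fin 3) (x + t • (Pi.single (1:Fin 3) (1:ℝ) : Fin 3 → ℝ))) =
        fun t : ℝ => (((1 - F ^ 2) * x 1 * x 2 ^ 2) + ((1 - F ^ 2) * x 2 ^ 2) * t + (0) * t ^ 2) /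
          (Real.sqrt ((x 0 ^ 2 + x 1 ^ 2 + F ^ 2 * x 2 ^ 2) + (2 * x 1) * t + (1) * t ^ 2) *
            Real.sqrt ((x 0 ^ 2 + x 1 ^ 2 + x 2 ^ 2) + (2 * x 1) * t + (1) * t ^ 2) ^ 3) := by
      funext t
      simp [cpart, Pi.single_apply]
      ring_nf
    rw [heq] at hd
    rw [hd.unique (key2 _ _ _ _ _ _ _ _ _ hPu hQu)]
    simp only [Mmat, Matrix.smul_apply, Matrix.of_apply, Matrix.cons_val', Matrix.cons_val_zero,
      Matrix.cons_val_one, Matrix.head_cons, Matrix.empty_val', Matrix.cons_val_fin_one,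
      Matrix.head_fin_const, Matrix.cons_val_two, Matrix.tail_cons, smul_eq_mul]
    set a := Real.sqrt (x 0 ^ 2 + x 1 ^ 2 + F ^ 2 * x 2 ^ 2) with hha
    set b := Real.sqrt (x 0 ^ 2 + x 1 ^ 2 + x 2 ^ 2) with hhb
    have ha : 0 < a := Real.sqrt_pos.mpr hPu
    have hb : 0 < b := Real.sqrt_pos.mpr hQu
    field_simp
    ring
  · show fderiv ℝ (cpart F (2:Fin 3)) x (Pi.single (1:Fin 3) 1) = Mmat F x 1 2
    have hd := fderiv_line (cpart_differentiableAt hF hx (2:Fin 3))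
      ((Pi.single (1:Fin 3) (1:ℝ) : Fin 3 → ℝ))
    have heq : (fun t : ℝ => cpart F (2:Fin 3) (x + t • (Pi.single (1:Fin 3) (1:ℝ) : Fin 3 → ℝ))) =
        fun t : ℝ => ((-(1 - F ^ 2) * x 2 * (x 0 ^ 2 + x 1 ^ 2)) + (-(2 * (1 - F ^ 2) * x 2 * x 1)) * t + (-((1 - F ^ 2) * x 2)) * t ^ 2) /
          (Real.sqrt ((x 0 ^ 2 + x 1 ^ 2 + F ^ 2 * x 2 ^ 2) + (2 * x 1) * t + (1) * t ^ 2) *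
            Real.sqrt ((x 0 ^ 2 + x 1 ^ 2 + x 2 ^ 2) + (2 * x 1) * t + (1) * t ^ 2) ^ 3) := by
      funext t
      simp [cpart, Pi.single_apply]
      ring_nf
    rw [heq] at hd
    rw [hd.unique (key2 _ _ _ _ _ _ _ _ _ hPu hQu)]
    simp only [Mmat, Matrix.smul_apply, Matrix.of_apply, Matrix.cons_val', Matrix.cons_val_zero,
      Matrix.cons_val_one, Matrix.head_cons, Matrix.empty_val', Matrix.cons_val_fin_one,
      Matrix.head_fin_const, Matrix.cons_val_two, Matrix.tail_cons, smul_eq_mul]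
    set a := Real.sqrt (x 0 ^ 2 + x 1 ^ 2 + F ^ 2 * x 2 ^ 2) with hha
    set b := Real.sqrt (x 0 ^ 2 + x 1 ^ 2 + x 2 ^ 2) with hhb
    have ha : 0 < a := Real.sqrt_pos.mpr hPu
    have hb : 0 < b := Real.sqrt_pos.mpr hQu
    field_simp
    ring
  · show fderiv ℝ (cpart F (0:Fin 3)) x (Pi.single (2:Fin 3) 1) = Mmat F x 2 0
    have hd := fderiv_line (cpart_differentiableAt hF hx (0:Fin 3))
      ((Pi.single (2:Fin 3) (1:ℝ) : Fin 3 → ℝ))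
    have heq : (fun t : ℝ => cpart F (0:Fin 3) (x + t • (Pi.single (2:Fin 3) (1:ℝ) : Fin 3 → ℝ))) =
        fun t : ℝ => (((1 - F ^ 2) * x 0 * x 2 ^ 2) + (2 * (1 - F ^ 2) * x 0 * x 2) * t + ((1 - F ^ 2) * x 0) * t ^ 2) /
          (Real.sqrt ((x 0 ^ 2 + x 1 ^ 2 + F ^ 2 * x 2 ^ 2) + (2 * F ^ 2 * x 2) * t + (F ^ 2) * t ^ 2) *
            Real.sqrt ((x 0 ^ 2 + x 1 ^ 2 + x 2 ^ 2) + (2 * x 2) * t + (1) * t ^ 2) ^ 3) := by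
      funext t
      simp [cpart, Pi.single_apply]
      ring_nf
    rw [heq] at hd
    rw [hd.unique (key2 _ _ _ _ _ _ _ _ _ hPu hQu)]
    simp only [Mmat, Matrix.smul_apply, Matrix.of_apply, Matrix.cons_val', Matrix.cons_val_zero,
      Matrix.cons_val_one, Matrix.head_cons, Matrix.empty_val', Matrix.cons_val_fin_one,
      Matrix.head_fin_const, Matrix.cons_val_two, Matrix.tail_cons, smul_eq_mul]
    set a := Real.sqrt (x 0 ^ 2 + x 1 ^ 2 + F ^ 2 * x 2 ^ 2) with hha
    set b := Real.sqrt (x 0 ^ 2 + x 1 ^ 2 + x 2 ^ 2) with hhb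
    have ha : 0 < a := Real.sqrt_pos.mpr hPu
    have hb : 0 < b := Real.sqrt_pos.mpr hQu
    field_simp
    ring
  · show fderiv ℝ (cpart F (1:Fin 3)) x (Pi.single (2:Fin 3) 1) = Mmat F x 2 1
    have hd := fderiv_line (cpart_differentiableAt hF hx (1:Fin 3))
      ((Pi.single (2:Fin 3) (1:ℝ) : Fin 3 → ℝ))
    have heq : (fun t : ℝ => cpart F (1:Fin 3) (x + t • (Pi.single (2:Fin 3) (1:ℝ) : Fin 3 → ℝ))) =
        fun t : ℝ => (((1 - F ^ 2) * x 1 * x 2 ^ 2) + (2 * (1 - F ^ 2) * x 1 * x 2) * t + ((1 - F ^ 2) * x 1) * t ^ 2) /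
          (Real.sqrt ((x 0 ^ 2 + x 1 ^ 2 + F ^ 2 * x 2 ^ 2) + (2 * F ^ 2 * x 2) * t + (F ^ 2) * t ^ 2) *
            Real.sqrt ((x 0 ^ 2 + x 1 ^ 2 + x 2 ^ 2) + (2 * x 2) * t + (1) * t ^ 2) ^ 3) := by
      funext t
      simp [cpart, Pi.single_apply]
      ring_nf
    rw [heq] at hd
    rw [hd.unique (key2 _ _ _ _ _ _ _ _ _ hPu hQu)]
    simp only [Mmat, Matrix.smul_apply, Matrix.of_apply, Matrix.cons_val', Matrix.cons_val_zero,
      Matrix.cons_val_one, Matrix.head_cons, Matrix.empty_val', Matrix.cons_val_fin_one,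
      Matrix.head_fin_const, Matrix.cons_val_two, Matrix.tail_cons, smul_eq_mul]
    set a := Real.sqrt (x 0 ^ 2 + x 1 ^ 2 + F ^ 2 * x 2 ^ 2) with hha
    set b := Real.sqrt (x 0 ^ 2 + x 1 ^ 2 + x 2 ^ 2) with hhb
    have ha : 0 < a := Real.sqrt_pos.mpr hPu
    have hb : 0 < b := Real.sqrt_pos.mpr hQu
    field_simp
    ring
  · show fderiv ℝ (cpart F (2:Fin 3)) x (Pi.single (2:Fin 3) 1) = Mmat F x 2 2
    have hd := fderiv_line (cpart_differentiableAt hF hx (2:Fin 3))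
      ((Pi.single (2:Fin 3) (1:ℝ) : Fin 3 → ℝ))
    have heq : (fun t : ℝ => cpart F (2:Fin 3) (x + t • (Pi.single (2:Fin 3) (1:ℝ) : Fin 3 → ℝ))) =
        fun t : ℝ => ((-(1 - F ^ 2) * x 2 * (x 0 ^ 2 + x 1 ^ 2)) + (-((1 - F ^ 2) * (x 0 ^ 2 + x 1 ^ 2))) * t + (0) * t ^ 2) /
          (Real.sqrt ((x 0 ^ 2 + x 1 ^ 2 + F ^ 2 * x 2 ^ 2) + (2 * F ^ 2 * x 2) * t + (F ^ 2) * t ^ 2) *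
            Real.sqrt ((x 0 ^ 2 + x 1 ^ 2 + x 2 ^ 2) + (2 * x 2) * t + (1) * t ^ 2) ^ 3) := by
      funext t
      simp [cpart, Pi.single_apply]
      ring_nf
    rw [heq] at hd
    rw [hd.unique (key2 _ _ _ _ _ _ _ _ _ hPu hQu)]
    simp only [Mmat, Matrix.smul_apply, Matrix.of_apply, Matrix.cons_val', Matrix.cons_val_zero,
      Matrix.cons_val_one, Matrix.head_cons, Matrix.empty_val', Matrix.cons_val_fin_one,
      Matrix.head_fin_const, Matrix.cons_val_two, Matrix.tail_cons, smul_eq_mul]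
    set a := Real.sqrt (x 0 ^ 2 + x 1 ^ 2 + F ^ 2 * x 2 ^ 2) with hha
    set b := Real.sqrt (x 0 ^ 2 + x 1 ^ 2 + x 2 ^ 2) with hhb
    have ha : 0 < a := Real.sqrt_pos.mpr hPu
    have hb : 0 < b := Real.sqrt_pos.mpr hQu
    field_simp
    ring
end
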